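/- arXiv:1404.4941 — 3 statements merged into one kernel-verified Lean document; each statement's English description precedes it below -/
import Mathlib

section
/- Let H be a Hopf algebra over a field k. The algebra C_H of right H_ab-coinvariants of S(t_H)_Θ is a localization of the subalgebra S(t_H)^{co-H_ab} of right H_ab-coinvariants of S(t_H); that is, every element of C_H becomes an element of S(t_H)^{co-H_ab} after multiplication by a suitable invertible element of S(t_H)^{co-H_ab}, and C_H is obtained from S(t_H)^{co-H_ab} by inverting such elements. -/
open TensorProduct

noncomputable section

/-- A submodule `S` of a coalgebra `C` is a subcoalgebra if `Δ(S) ⊆ S ⊗ S`. -/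
def IsSubcoalg (k : Type*) [Field k] {C : Type*} [AddCommGroup C] [Module k C] [Coalgebra k C]
    (S : Submodule k C) : Prop :=
  ∀ x ∈ S, Coalgebra.comul (R := k) x ∈
    LinearMap.range (TensorProduct.map S.subtype S.subtype)

/-- A coalgebra is pointed if every simple subcoalgebra is one-dimensional. -/
def IsPointedCoalg (k C : Type*) [Field k] [AddCommGroup C] [Module k C] [Coalgebra k C] : Prop :=
  ∀ S : Submodule k C, IsSubcoalg k S → S ≠ ⊥ →
    (∀ T : Submodule k C, IsSubcoalg k T → T < S → T = ⊥) →
    Module.finrank k S = 1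

/-- A group-like element: `ε(g) = 1` and `Δ(g) = g ⊗ g`. -/
def IsGpLike (k : Type*) [Field k] {C : Type*} [AddCommGroup C] [Module k C] [Coalgebra k C]
    (g : C) : Prop :=
  Coalgebra.counit (R := k) g = 1 ∧ Coalgebra.comul (R := k) g = g ⊗ₜ[k] g

/-- Data exhibiting `A` as the free commutative Hopf algebra `S(t_C)_Θ` on a coalgebra `C`. -/
structure FreeCommHopfData (k : Type*) [Field k] (C : Type*) [AddCommGroup C] [Module k C]
    [Coalgebra k C] (A : Type*) [CommRing A] [HopfAlgebra k A] where
  t : C →ₗ[k] A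
  tinv : C →ₗ[k] A
  comul_t : ∀ x : C, Coalgebra.comul (R := k) (t x) = TensorProduct.map t t (Coalgebra.comul x)
  comul_tinv : ∀ x : C, Coalgebra.comul (R := k) (tinv x)
      = TensorProduct.map tinv tinv (TensorProduct.comm k C C (Coalgebra.comul (R := k) x))
  counit_t : ∀ x : C, Coalgebra.counit (R := k) (t x) = Coalgebra.counit (R := k) x
  counit_tinv : ∀ x : C, Coalgebra.counit (R := k) (tinv x) = Coalgebra.counit (R := k) x
  mul_t_tinv : ∀ x : C, LinearMap.mul' k A (TensorProduct.map t tinv (Coalgebra.comul (R := k) x))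
      = Coalgebra.counit (R := k) x • (1 : A)
  mul_tinv_t : ∀ x : C, LinearMap.mul' k A (TensorProduct.map tinv t (Coalgebra.comul (R := k) x))
      = Coalgebra.counit (R := k) x • (1 : A)
  antipode_t : ∀ x : C, HopfAlgebra.antipode (R := k) (t x) = tinv x
  antipode_tinv : ∀ x : C, HopfAlgebra.antipode (R := k) (tinv x) = t x
  injective_t : Function.Injective t
  isDomain : IsDomain A
  adjoin_eq_top : Algebra.adjoin k (Set.range t ∪ Set.range tinv) = ⊤
  universal : ∀ {A' : Type*} [CommRing A'] [HopfAlgebra k A'] (f : C →ₗ[k] A'),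
      (∀ x : C, Coalgebra.comul (R := k) (f x) = TensorProduct.map f f (Coalgebra.comul (R := k) x)) →
      (∀ x : C, Coalgebra.counit (R := k) (f x) = Coalgebra.counit (R := k) x) →
      ∃! φ : A →ₐc[k] A', ∀ x : C, φ (t x) = f x

/-- Data exhibiting `Hab` as the largest commutative Hopf algebra quotient of `H`. -/
structure HabData (k : Type*) [Field k] (H : Type*) [Ring H] [HopfAlgebra k H]
    (Hab : Type*) [CommRing Hab] [HopfAlgebra k Hab] where
  q : H →ₐc[k] Hab
  surjective_q : Function.Surjective q
  universal : ∀ {B : Type*} [CommRing B] [HopfAlgebra k B] (f : H →ₐc[k] B),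
      ∃! g : Hab →ₐc[k] B, ∀ x : H, g (q x) = f x

variable {k : Type*} [Field k]

section Generic

variable {H : Type*} [Ring H] [HopfAlgebra k H] {A : Type*} [CommRing A] [HopfAlgebra k A]

/-- σ(x,y) = t_{x₁} t_{y₁} t⁻¹_{x₂ y₂}. -/
def sigmaElem (F : FreeCommHopfData k H A) (x y : H) : A :=
  (LinearMap.mul' k A).comp
    ((TensorProduct.map (LinearMap.mul' k A) LinearMap.id).comp
      ((TensorProduct.map (TensorProduct.map F.t F.t) (F.tinv.comp (LinearMap.mul' k H))).comp
        (TensorProduct.tensorTensorTensorComm k H H H H).toLinearMap))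
    ((Coalgebra.comul (R := k) x) ⊗ₜ[k] (Coalgebra.comul (R := k) y))

/-- σ⁻¹(x,y) = t_{x₁ y₁} t⁻¹_{x₂} t⁻¹_{y₂}. -/
def sigmaInvElem (F : FreeCommHopfData k H A) (x y : H) : A :=
  (LinearMap.mul' k A).comp
    ((TensorProduct.map LinearMap.id (LinearMap.mul' k A)).comp
      ((TensorProduct.map (F.t.comp (LinearMap.mul' k H)) (TensorProduct.map F.tinv F.tinv)).comp
        (TensorProduct.tensorTensorTensorComm k H H H H).toLinearMap))
    ((Coalgebra.comul (R := k) x) ⊗ₜ[k] (Coalgebra.comul (R := k) y))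

/-- The generic base algebra B_H. -/
def genericBase (F : FreeCommHopfData k H A) : Subalgebra k A :=
  Algebra.adjoin k ({a | ∃ x y : H, a = sigmaElem F x y} ∪ {a | ∃ x y : H, a = sigmaInvElem F x y})

/-- The coaction δ_S = (id ⊗ q̃) ∘ Δ of H_ab on S(t_H)_Θ, as an algebra map. -/
def coactS {Hab : Type*} [CommRing Hab] [HopfAlgebra k Hab] (qt : A →ₐc[k] Hab) :
    A →ₐ[k] A ⊗[k] Hab :=
  (Algebra.TensorProduct.map (AlgHom.id k A) (qt : A →ₐ[k] Hab)).comp (Bialgebra.comulAlgHom k A)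

/-- The subalgebra C_H of right H_ab-coinvariants of S(t_H)_Θ. -/
def coinvCH {Hab : Type*} [CommRing Hab] [HopfAlgebra k Hab] (qt : A →ₐc[k] Hab) :
    Subalgebra k A :=
  AlgHom.equalizer (coactS qt) Algebra.TensorProduct.includeLeft

end Generic

/-- `B` is a localization of `A` (inside an ambient commutative ring `R`): `A ⊆ B`, and `B` is
obtained from `A` by inverting a multiplicative subset of `A`. -/
def IsLocalizationOfSet {R : Type*} [CommRing R] (A B : Set R) : Prop :=
  A ⊆ B ∧ ∃ M : Submonoid R, (M : Set R) ⊆ A ∧ (∀ m ∈ M, ∃ b ∈ B, m * b = 1) ∧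
    ∀ b ∈ B, ∃ m ∈ M, b * m ∈ A


section PI

variable {H : Type*} [Ring H] [HopfAlgebra k H] {A : Type*} [CommRing A] [HopfAlgebra k A]

/-- The coaction δ_T of H on the tensor algebra T(X_H), with δ_T(X_x) = X_{x₁} ⊗ x₂. -/
def coactT (k : Type*) [Field k] (H : Type*) [Ring H] [HopfAlgebra k H] :
    TensorAlgebra k H →ₐ[k] TensorAlgebra k H ⊗[k] H :=
  TensorAlgebra.lift k
    ((TensorProduct.map (TensorAlgebra.ι k) LinearMap.id).comp
      (Coalgebra.comul (R := k) (A := H)))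

/-- The universal comodule algebra map μ : T(X_H) → S(t_H) ⊗ H, μ(X_x) = t_{x₁} ⊗ x₂. -/
def muMap (F : FreeCommHopfData k H A) : TensorAlgebra k H →ₐ[k] A ⊗[k] H :=
  TensorAlgebra.lift k
    ((TensorProduct.map F.t LinearMap.id).comp (Coalgebra.comul (R := k) (A := H)))

/-- p_x = t_{x₁} t_{S(x₂)}, as a linear function of x. -/
def pMap (F : FreeCommHopfData k H A) : H →ₗ[k] A :=
  (LinearMap.mul' k A).comp
    ((TensorProduct.map F.t (F.t.comp (HopfAlgebra.antipode (R := k)))).comp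
      (Coalgebra.comul (R := k)))

/-- q_{x,y} = t_{x₁} t_{y₁} t_{S(x₂ y₂)}, as a linear function of x ⊗ y. -/
def qMap (F : FreeCommHopfData k H A) : H ⊗[k] H →ₗ[k] A :=
  ((LinearMap.mul' k A).comp
    ((TensorProduct.map (LinearMap.mul' k A) LinearMap.id).comp
      ((TensorProduct.map (TensorProduct.map F.t F.t)
          ((F.t.comp ((HopfAlgebra.antipode (R := k)).comp (LinearMap.mul' k H))))).comp
        (TensorProduct.tensorTensorTensorComm k H H H H).toLinearMap))).comp
    (TensorProduct.map (Coalgebra.comul (R := k)) (Coalgebra.comul (R := k)))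

/-- P_x = X_{x₁} X_{S(x₂)} in the tensor algebra. -/
def PElem (k : Type*) [Field k] {H : Type*} [Ring H] [HopfAlgebra k H] (x : H) :
    TensorAlgebra k H :=
  (LinearMap.mul' k (TensorAlgebra k H))
    ((TensorProduct.map (TensorAlgebra.ι k)
      ((TensorAlgebra.ι k).comp (HopfAlgebra.antipode (R := k)))) (Coalgebra.comul (R := k) x))

/-- Q_{x,y} = X_{x₁} X_{y₁} X_{S(x₂ y₂)} in the tensor algebra. -/
def QElem (k : Type*) [Field k] {H : Type*} [Ring H] [HopfAlgebra k H] (x y : H) :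
    TensorAlgebra k H :=
  (LinearMap.mul' k (TensorAlgebra k H))
    ((TensorProduct.map (LinearMap.mul' k (TensorAlgebra k H)) LinearMap.id)
      ((TensorProduct.map (TensorProduct.map (TensorAlgebra.ι k) (TensorAlgebra.ι k))
          ((TensorAlgebra.ι k).comp ((HopfAlgebra.antipode (R := k)).comp (LinearMap.mul' k H))))
        ((TensorProduct.tensorTensorTensorComm k H H H H)
          ((Coalgebra.comul (R := k) x) ⊗ₜ[k] (Coalgebra.comul (R := k) y)))))

/-- μ̄(V_H): the image in S(t_H) ⊆ A of the coinvariants of the universal comodule algebra. -/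
def VHSet (F : FreeCommHopfData k H A) : Set A :=
  {a : A | ∃ u : TensorAlgebra k H, muMap F u = a ⊗ₜ[k] 1}

/-- `a` is a monomial of degree ≤ m (and ≥ 1) in the t-variables. -/
def IsTMonomialLe (F : FreeCommHopfData k H A) (m : ℕ) (a : A) : Prop :=
  ∃ d : ℕ, 1 ≤ d ∧ d ≤ m ∧ ∃ f : Fin d → H, a = ∏ j, F.t (f j)

/-- `a` is a monomial of degree ≤ m in the variables t_g, g group-like. -/
def IsTGpMonomialLe (F : FreeCommHopfData k H A) (m : ℕ) (a : A) : Prop :=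
  ∃ d : ℕ, 1 ≤ d ∧ d ≤ m ∧ ∃ f : Fin d → H, (∀ j, IsGpLike k (f j)) ∧ a = ∏ j, F.t (f j)

end PI

/-- Data exhibiting `H` as the Hopf algebra O_k(G) of k-valued functions on a finite group `G`. -/
structure FunAlgData (k : Type*) [Field k] (G : Type*) [Group G] [Fintype G] [DecidableEq G]
    (H : Type*) [CommRing H] [HopfAlgebra k H] where
  e : Module.Basis G k H
  mul_e : ∀ g h : G, e g * e h = if g = h then e g else 0
  sum_e : ∑ g : G, e g = 1
  comul_e : ∀ g : G, Coalgebra.comul (R := k) (e g) = ∑ h : G, e (g * h⁻¹) ⊗ₜ[k] e h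
  counit_e : ∀ g : G, Coalgebra.counit (R := k) (e g) = if g = 1 then (1 : k) else 0
  antipode_e : ∀ g : G, HopfAlgebra.antipode (R := k) (e g) = e g⁻¹



section AntipodeAux
open Coalgebra

variable {H : Type*} [Ring H] [HopfAlgebra k H]
variable {B : Type*} [Ring B] [Algebra k B]

/-- Convolution product of two linear maps from a coalgebra to an algebra. -/
def convMul (f g : H →ₗ[k] B) : H →ₗ[k] B :=
  (LinearMap.mul' k B) ∘ₗ (TensorProduct.map f g) ∘ₗ (Coalgebra.comul (R := k))

lemma convMul_repr (f g : H →ₗ[k] B) (x : H) (r : Coalgebra.Repr k x (H × H)) :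
    convMul f g x = ∑ i ∈ r.index, f (r.left i) * g (r.right i) := by
  simp only [convMul, LinearMap.comp_apply, ← r.eq, map_sum, TensorProduct.map_tmul,
    LinearMap.mul'_apply]

/-- the convolution unit -/
def convOne : H →ₗ[k] B := (Algebra.linearMap k B) ∘ₗ (Coalgebra.counit (R := k))

lemma sum_counit_smul (x : H) (r : Coalgebra.Repr k x (H × H)) :
    ∑ i ∈ r.index, Coalgebra.counit (R := k) (r.left i) • r.right i = x := by
  have h := congrArg (TensorProduct.lid k H) (Coalgebra.sum_counit_tmul_eq (R := k) r)
  rw [map_sum] at h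
  simp only [TensorProduct.lid_tmul, one_smul] at h
  exact h

lemma sum_smul_counit (x : H) (r : Coalgebra.Repr k x (H × H)) :
    ∑ i ∈ r.index, Coalgebra.counit (R := k) (r.right i) • r.left i = x := by
  have h := congrArg (TensorProduct.rid k H) (Coalgebra.sum_tmul_counit_eq (R := k) r)
  rw [map_sum] at h
  simp only [TensorProduct.rid_tmul, one_smul] at h
  exact h

lemma convOne_convMul (f : H →ₗ[k] B) : convMul (convOne (k := k)) f = f := by
  ext x
  rw [convMul_repr _ _ x (ℛ k x)]
  have : ∀ i ∈ (ℛ k x).index, convOne (B := B) (k := k) ((ℛ k x).left i) * f ((ℛ k x).right i)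
      = f (Coalgebra.counit (R := k) ((ℛ k x).left i) • (ℛ k x).right i) := by
    intro i _
    simp only [convOne, LinearMap.comp_apply, Algebra.linearMap_apply, ← Algebra.smul_def,
      map_smul]
  rw [Finset.sum_congr rfl this, ← map_sum, sum_counit_smul x (ℛ k x)]

lemma convMul_convOne (f : H →ₗ[k] B) : convMul f (convOne (k := k)) = f := by
  ext x
  rw [convMul_repr _ _ x (ℛ k x)]
  have : ∀ i ∈ (ℛ k x).index, f ((ℛ k x).left i) * convOne (B := B) (k := k) ((ℛ k x).right i)
      = f (Coalgebra.counit (R := k) ((ℛ k x).right i) • (ℛ k x).left i) := by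
    intro i _
    simp only [convOne, LinearMap.comp_apply, Algebra.linearMap_apply]
    rw [← Algebra.commutes, ← Algebra.smul_def, ← map_smul]
  rw [Finset.sum_congr rfl this, ← map_sum, sum_smul_counit x (ℛ k x)]

lemma convMul_assoc (f g h : H →ₗ[k] B) :
    convMul (convMul f g) h = convMul f (convMul g h) := by
  ext x
  set r := ℛ k x
  have a₁ : (i : r.ι) → Coalgebra.Repr k (r.left i) (H × H) := fun i => ℛ k (r.left i)
  have a₂ : (i : r.ι) → Coalgebra.Repr k (r.right i) (H × H) := fun i => ℛ k (r.right i)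
  have key := Coalgebra.sum_tmul_tmul_eq (R := k) r a₁ a₂
  -- apply the trilinear multiplication
  let Φ : H ⊗[k] (H ⊗[k] H) →ₗ[k] B :=
    (LinearMap.mul' k B) ∘ₗ (TensorProduct.map f ((LinearMap.mul' k B) ∘ₗ TensorProduct.map g h))
  have key2 := congrArg Φ key
  simp only [map_sum, Φ, LinearMap.comp_apply, TensorProduct.map_tmul,
    LinearMap.mul'_apply] at key2
  rw [convMul_repr _ _ x r, convMul_repr _ _ x r]
  calc ∑ i ∈ r.index, convMul f g (r.left i) * h (r.right i)
      = ∑ i ∈ r.index, ∑ j ∈ (a₁ i).index,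
          f ((a₁ i).left j) * (g ((a₁ i).right j) * h (r.right i)) := by
        refine Finset.sum_congr rfl fun i _ => ?_
        rw [convMul_repr _ _ _ (a₁ i), Finset.sum_mul]
        exact Finset.sum_congr rfl fun j _ => mul_assoc _ _ _
    _ = ∑ i ∈ r.index, ∑ j ∈ (a₂ i).index,
          f (r.left i) * (g ((a₂ i).left j) * h ((a₂ i).right j)) := key2
    _ = ∑ i ∈ r.index, f (r.left i) * convMul g h (r.right i) := by
        refine Finset.sum_congr rfl fun i _ => ?_
        rw [convMul_repr _ _ _ (a₂ i), Finset.mul_sum]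

section Hopf
open HopfAlgebra

local notation "S" => HopfAlgebra.antipode (R := k) (A := H)
local notation "Δ" => Coalgebra.comul (R := k) (A := H)

/-- the comultiplication composed with the antipode -/
def Fmap : H →ₗ[k] H ⊗[k] H := (Coalgebra.comul (R := k)) ∘ₗ S

/-- the twisted comultiplication of the antipode -/
def Gmap : H →ₗ[k] H ⊗[k] H :=
  (TensorProduct.map S S) ∘ₗ (TensorProduct.comm k H H).toLinearMap ∘ₗ (Coalgebra.comul (R := k))

lemma conv_comul_Fmap : convMul (Coalgebra.comul (R := k) (A := H)) (Fmap (k := k)) = convOne := by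
  ext x
  rw [convMul_repr _ _ x (ℛ k x)]
  have : ∀ i ∈ (ℛ k x).index,
      Δ ((ℛ k x).left i) * Fmap (k := k) ((ℛ k x).right i)
      = Bialgebra.comulAlgHom k H ((ℛ k x).left i * S ((ℛ k x).right i)) := by
    intro i _
    simp [Fmap, Bialgebra.comulAlgHom_apply]
  rw [Finset.sum_congr rfl this, ← map_sum,
    HopfAlgebra.sum_mul_antipode_eq_smul (ℛ k x)]
  simp [convOne, Algebra.algebraMap_eq_smul_one]

lemma convOne_apply (x : H) :
    convOne (k := k) (B := H ⊗[k] H) x = Coalgebra.counit (R := k) x • 1 := by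
  simp [convOne, Algebra.algebraMap_eq_smul_one]

lemma conv_Gmap_comul : convMul (Gmap (k := k)) (Coalgebra.comul (R := k) (A := H)) = convOne := by
  ext x
  set r := ℛ k x with hr
  have a₁ : (i : r.ι) → Coalgebra.Repr k (r.left i) (H × H) := fun i => ℛ k (r.left i)
  have a₂ : (i : r.ι) → Coalgebra.Repr k (r.right i) (H × H) := fun i => ℛ k (r.right i)
  set Ξ : H ⊗[k] (H ⊗[k] H) →ₗ[k] H ⊗[k] H :=
    (LinearMap.mul' k (H ⊗[k] H)) ∘ₗ
      (TensorProduct.map ((TensorProduct.map S S) ∘ₗ (TensorProduct.comm k H H).toLinearMap)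
        (Coalgebra.comul (R := k))) ∘ₗ (TensorProduct.assoc k H H H).symm.toLinearMap with hΞ
  have hΞ_apply : ∀ (c a b : H), Ξ (c ⊗ₜ[k] (a ⊗ₜ[k] b))
      = ((S a) ⊗ₜ[k] (S c)) * Coalgebra.comul (R := k) b := by
    intro c a b
    simp [hΞ, TensorProduct.assoc_symm_tmul]
  calc convMul (Gmap (k := k)) (Coalgebra.comul (R := k) (A := H)) x
      = ∑ i ∈ r.index, Gmap (k := k) (r.left i) * Δ (r.right i) := convMul_repr _ _ x r
    _ = ∑ i ∈ r.index, ∑ j ∈ (a₁ i).index,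
          Ξ ((a₁ i).left j ⊗ₜ[k] ((a₁ i).right j ⊗ₜ[k] r.right i)) := by
        refine Finset.sum_congr rfl fun i _ => ?_
        have hG : Gmap (k := k) (r.left i)
            = ∑ j ∈ (a₁ i).index, (S ((a₁ i).right j)) ⊗ₜ[k] (S ((a₁ i).left j)) := by
          simp only [Gmap, LinearMap.comp_apply, ← (a₁ i).eq, map_sum, LinearEquiv.coe_coe,
            TensorProduct.comm_tmul, TensorProduct.map_tmul]
        rw [hG, Finset.sum_mul]
        exact Finset.sum_congr rfl fun j _ => (hΞ_apply _ _ _).symm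
    _ = ∑ i ∈ r.index, ∑ m ∈ (a₂ i).index,
          Ξ (r.left i ⊗ₜ[k] ((a₂ i).left m ⊗ₜ[k] (a₂ i).right m)) := by
        have key := congrArg Ξ (Coalgebra.sum_tmul_tmul_eq (R := k) r a₁ a₂)
        simpa only [map_sum] using key
    _ = ∑ i ∈ r.index, (1 : H) ⊗ₜ[k] ((S (r.left i)) * r.right i) := by
        refine Finset.sum_congr rfl fun i _ => ?_
        set Ξ2 : H ⊗[k] (H ⊗[k] H) →ₗ[k] H ⊗[k] H :=
          (TensorProduct.map ((LinearMap.mul' k H) ∘ₗ (TensorProduct.map S LinearMap.id))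
            (LinearMap.mulLeft k (S (r.left i)))) ∘ₗ
            (TensorProduct.assoc k H H H).symm.toLinearMap with hΞ2
        have hΞ2_apply : ∀ (a u v : H), Ξ2 (a ⊗ₜ[k] (u ⊗ₜ[k] v))
            = ((S a) * u) ⊗ₜ[k] ((S (r.left i)) * v) := by
          intro a u v
          simp [hΞ2, TensorProduct.assoc_symm_tmul, LinearMap.mulLeft_apply]
        have b₁ : (m : (a₂ i).ι) → Coalgebra.Repr k ((a₂ i).left m) (H × H) :=
          fun m => ℛ k ((a₂ i).left m)
        have b₂ : (m : (a₂ i).ι) → Coalgebra.Repr k ((a₂ i).right m) (H × H) :=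
          fun m => ℛ k ((a₂ i).right m)
        calc ∑ m ∈ (a₂ i).index, Ξ (r.left i ⊗ₜ[k] ((a₂ i).left m ⊗ₜ[k] (a₂ i).right m))
            = ∑ m ∈ (a₂ i).index, ∑ p ∈ (b₂ m).index,
                Ξ2 ((a₂ i).left m ⊗ₜ[k] ((b₂ m).left p ⊗ₜ[k] (b₂ m).right p)) := by
              refine Finset.sum_congr rfl fun m _ => ?_
              rw [hΞ_apply]
              conv_lhs => rw [← (b₂ m).eq]
              rw [Finset.mul_sum]
              refine Finset.sum_congr rfl fun p _ => ?_
              rw [hΞ2_apply, Algebra.TensorProduct.tmul_mul_tmul]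
          _ = ∑ m ∈ (a₂ i).index, ∑ j ∈ (b₁ m).index,
                Ξ2 ((b₁ m).left j ⊗ₜ[k] ((b₁ m).right j ⊗ₜ[k] (a₂ i).right m)) := by
              have key := congrArg Ξ2 (Coalgebra.sum_tmul_tmul_eq (R := k) (a₂ i) b₁ b₂)
              simpa only [map_sum] using key.symm
          _ = ∑ m ∈ (a₂ i).index,
                (1 : H) ⊗ₜ[k] (Coalgebra.counit (R := k) ((a₂ i).left m) •
                  ((S (r.left i)) * (a₂ i).right m)) := by
              refine Finset.sum_congr rfl fun m _ => ?_
              have : ∀ j ∈ (b₁ m).index,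
                  Ξ2 ((b₁ m).left j ⊗ₜ[k] ((b₁ m).right j ⊗ₜ[k] (a₂ i).right m))
                  = ((S ((b₁ m).left j)) * (b₁ m).right j) ⊗ₜ[k]
                      ((S (r.left i)) * (a₂ i).right m) := fun j _ => hΞ2_apply _ _ _
              rw [Finset.sum_congr rfl this, ← TensorProduct.sum_tmul,
                HopfAlgebra.sum_antipode_mul_eq_smul (b₁ m), TensorProduct.smul_tmul]
          _ = (1 : H) ⊗ₜ[k] ((S (r.left i)) * r.right i) := by
              rw [← TensorProduct.tmul_sum]
              congr 1
              have : ∀ m ∈ (a₂ i).index,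
                  Coalgebra.counit (R := k) ((a₂ i).left m) • ((S (r.left i)) * (a₂ i).right m)
                  = (S (r.left i)) * (Coalgebra.counit (R := k) ((a₂ i).left m) •
                      (a₂ i).right m) := fun m _ => (mul_smul_comm _ _ _).symm
              rw [Finset.sum_congr rfl this, ← Finset.mul_sum, sum_counit_smul _ (a₂ i)]
    _ = convOne x := by
        rw [← TensorProduct.tmul_sum, HopfAlgebra.sum_antipode_mul_eq_smul r, convOne_apply]
        rw [TensorProduct.tmul_smul, Algebra.TensorProduct.one_def]

/-- The antipode is an anti-coalgebra morphism (comultiplication part). -/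
theorem comul_antipode' (x : H) :
    Coalgebra.comul (R := k) (S x)
      = TensorProduct.map S S ((TensorProduct.comm k H H) (Coalgebra.comul (R := k) x)) := by
  have h1 : convMul (Coalgebra.comul (R := k) (A := H)) (Fmap (k := k)) = convOne :=
    conv_comul_Fmap
  have h2 : convMul (Gmap (k := k)) (Coalgebra.comul (R := k) (A := H)) = convOne :=
    conv_Gmap_comul
  have : Gmap (k := k) (H := H) = Fmap (k := k) := by
    calc Gmap (k := k) (H := H) = convMul (Gmap (k := k)) convOne := (convMul_convOne _).symm
      _ = convMul (Gmap (k := k)) (convMul (Coalgebra.comul (R := k)) (Fmap (k := k))) := by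
          rw [h1]
      _ = convMul (convMul (Gmap (k := k)) (Coalgebra.comul (R := k))) (Fmap (k := k)) :=
          (convMul_assoc _ _ _).symm
      _ = convMul convOne (Fmap (k := k)) := by rw [h2]
      _ = Fmap (k := k) := convOne_convMul _
  exact (LinearMap.congr_fun this x).symm

/-- The antipode is an anti-coalgebra morphism (counit part). -/
theorem counit_antipode' (x : H) :
    Coalgebra.counit (R := k) (S x) = Coalgebra.counit (R := k) x := by
  set r := ℛ k x with hr
  have h := congrArg (Bialgebra.counitAlgHom k H) (HopfAlgebra.sum_antipode_mul_eq_algebraMap_counit r)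
  simp only [map_sum, map_mul, Bialgebra.counitAlgHom_apply] at h
  have h2 : ∀ i ∈ r.index,
      Coalgebra.counit (R := k) (S (r.left i)) * Coalgebra.counit (R := k) (r.right i)
      = Coalgebra.counit (R := k) (S (Coalgebra.counit (R := k) (r.right i) • r.left i)) := by
    intro i _
    rw [map_smul, map_smul, smul_eq_mul, mul_comm]
  rw [Finset.sum_congr rfl h2] at h
  have h3 : ∑ i ∈ r.index,
      Coalgebra.counit (R := k) (S (Coalgebra.counit (R := k) (r.right i) • r.left i))
      = Coalgebra.counit (R := k) (S x) := by
    rw [← map_sum, ← map_sum, sum_smul_counit _ r]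
  rw [h3] at h
  simpa using h

end Hopf

end AntipodeAux

section ComatrixSection
set_option linter.unusedSectionVars false

namespace ComatrixAux

section Coords
variable {B : Type*} [DecidableEq B]
variable {H : Type*} [AddCommGroup H] [Module k H]
variable {M M' : Type*} [AddCommGroup M] [Module k M] [AddCommGroup M'] [Module k M']

/-- Right coordinates of a tensor with respect to a basis of the right factor. -/
def rco (b : Module.Basis B k H) : M ⊗[k] H ≃ₗ[k] (B →₀ M) :=
  (TensorProduct.congr (LinearEquiv.refl k M) b.repr) ≪≫ₗ TensorProduct.finsuppScalarRight k k M B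

/-- Left coordinates of a tensor with respect to a basis of the left factor. -/
def lco (b : Module.Basis B k H) : H ⊗[k] M ≃ₗ[k] (B →₀ M) :=
  (TensorProduct.congr b.repr (LinearEquiv.refl k M)) ≪≫ₗ TensorProduct.finsuppScalarLeft k M B

lemma rco_tmul (b : Module.Basis B k H) (x : M) (y : H) (s : B) :
    rco b (x ⊗ₜ[k] y) s = b.repr y s • x := by
  simp [rco, TensorProduct.finsuppScalarRight_apply_tmul_apply]

lemma lco_tmul (b : Module.Basis B k H) (y : H) (x : M) (r : B) :
    lco b (y ⊗ₜ[k] x) r = b.repr y r • x := by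
  simp [lco, TensorProduct.finsuppScalarLeft_apply_tmul_apply]

lemma rco_symm_apply (b : Module.Basis B k H) (f : B →₀ M) :
    (rco b).symm f = f.sum fun s m => m ⊗ₜ[k] b s := by
  induction f using Finsupp.induction_linear with
  | zero => simp
  | add f g hf hg =>
      rw [map_add, hf, hg, Finsupp.sum_add_index (by simp) (by intros; rw [TensorProduct.add_tmul])]
  | single s m =>
      rw [Finsupp.sum_single_index (by simp), LinearEquiv.symm_apply_eq]
      ext s'
      rw [rco_tmul, Finsupp.single_apply, Module.Basis.repr_self, Finsupp.single_apply]
      by_cases h : s = s' <;> simp [h]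

lemma lco_symm_apply (b : Module.Basis B k H) (f : B →₀ M) :
    (lco b).symm f = f.sum fun r m => (b r) ⊗ₜ[k] m := by
  induction f using Finsupp.induction_linear with
  | zero => simp
  | add f g hf hg =>
      rw [map_add, hf, hg, Finsupp.sum_add_index (by simp) (by intros; rw [TensorProduct.tmul_add])]
  | single s m =>
      rw [Finsupp.sum_single_index (by simp), LinearEquiv.symm_apply_eq]
      ext s'
      rw [lco_tmul, Finsupp.single_apply, Module.Basis.repr_self, Finsupp.single_apply]
      by_cases h : s = s' <;> simp [h]

lemma expand_r (b : Module.Basis B k H) (z : M ⊗[k] H) :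
    z = (rco b z).sum fun s m => m ⊗ₜ[k] b s := by
  conv_lhs => rw [← (rco b).symm_apply_apply z]
  rw [rco_symm_apply]

lemma expand_l (b : Module.Basis B k H) (z : H ⊗[k] M) :
    z = (lco b z).sum fun r m => (b r) ⊗ₜ[k] m := by
  conv_lhs => rw [← (lco b).symm_apply_apply z]
  rw [lco_symm_apply]

lemma expand_r_finset (b : Module.Basis B k H) (z : M ⊗[k] H) :
    z = ∑ s ∈ (rco b z).support, (rco b z s) ⊗ₜ[k] b s := expand_r b z

lemma expand_l_finset (b : Module.Basis B k H) (z : H ⊗[k] M) :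
    z = ∑ r ∈ (lco b z).support, (b r) ⊗ₜ[k] (lco b z r) := expand_l b z

lemma rco_map (b : Module.Basis B k H) (g : M →ₗ[k] M') (z : M ⊗[k] H) (s : B) :
    rco b ((g.rTensor H) z) s = g (rco b z s) := by
  induction z with
  | zero => simp
  | tmul x y => rw [LinearMap.rTensor_tmul, rco_tmul, rco_tmul, map_smul]
  | add z1 z2 h1 h2 => simp [map_add, Finsupp.add_apply, h1, h2]

lemma lco_map (b : Module.Basis B k H) (g : M →ₗ[k] M') (z : H ⊗[k] M) (r : B) :
    lco b ((g.lTensor H) z) r = g (lco b z r) := by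
  induction z with
  | zero => simp
  | tmul x y => rw [LinearMap.lTensor_tmul, lco_tmul, lco_tmul, map_smul]
  | add z1 z2 h1 h2 => simp [map_add, Finsupp.add_apply, h1, h2]

lemma rco_lco_assoc (b : Module.Basis B k H) (z : (H ⊗[k] H) ⊗[k] H) (r s : B) :
    lco b (rco b z s) r = rco b (lco b ((TensorProduct.assoc k H H H) z) r) s := by
  induction z with
  | zero => simp
  | add z1 z2 h1 h2 => simp [map_add, Finsupp.add_apply, h1, h2]
  | tmul u w =>
      induction u with
      | zero => simp
      | add u1 u2 h1 h2 => simp [TensorProduct.add_tmul, map_add, Finsupp.add_apply, h1, h2]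
      | tmul x y =>
          simp only [TensorProduct.assoc_tmul, rco_tmul, lco_tmul, map_smul,
            Finsupp.smul_apply]
          exact smul_comm _ _ _

lemma rco_assoc_symm_tmul (b : Module.Basis B k H) (x : H) (Z : H ⊗[k] H) (s : B) :
    rco b ((TensorProduct.assoc k H H H).symm (x ⊗ₜ[k] Z)) s = x ⊗ₜ[k] (rco b Z s) := by
  induction Z with
  | zero => simp
  | add z1 z2 h1 h2 =>
      simp [TensorProduct.tmul_add, map_add, Finsupp.add_apply, h1, h2]
  | tmul y w =>
      rw [TensorProduct.assoc_symm_tmul, rco_tmul, rco_tmul, TensorProduct.tmul_smul]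

lemma lco_assoc_tmul (b : Module.Basis B k H) (Z : H ⊗[k] H) (x : H) (r : B) :
    lco b ((TensorProduct.assoc k H H H) (Z ⊗ₜ[k] x)) r = (lco b Z r) ⊗ₜ[k] x := by
  induction Z with
  | zero => simp
  | add z1 z2 h1 h2 =>
      simp [TensorProduct.add_tmul, map_add, Finsupp.add_apply, h1, h2]
  | tmul y w =>
      rw [TensorProduct.assoc_tmul, lco_tmul, lco_tmul, TensorProduct.smul_tmul']

end Coords

section FTC
variable {B : Type*} [DecidableEq B]
variable {H : Type*} [AddCommGroup H] [Module k H] [Coalgebra k H]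

local notation "Δ" => Coalgebra.comul (R := k) (A := H)

/-- right components of `Δ y` -/
def wc (b : Module.Basis B k H) (y : H) : B →₀ H := rco b (Δ y)

/-- left components of `Δ y` -/
def vc (b : Module.Basis B k H) (y : H) : B →₀ H := lco b (Δ y)

/-- the double coefficients of `Δ² y` -/
def cc (b : Module.Basis B k H) (y : H) (r s : B) : H := lco b (Δ (wc b y s)) r

lemma key1 (b : Module.Basis B k H) (y : H) (r s : B) :
    rco b (Δ (vc b y r)) s = cc b y r s := by
  have h1 : Δ (vc b y r) = lco b ((Coalgebra.comul (R := k)).lTensor H (Δ y)) r := by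
    rw [vc, ← lco_map]
  rw [h1, ← Coalgebra.coassoc_apply (R := k), ← rco_lco_assoc, rco_map]
  rfl

lemma comul_cc_right (b : Module.Basis B k H) (y : H) (r s : B) :
    Δ (cc b y r s) = (rco b (Δ (vc b y r))).sum
      (fun s' m => m ⊗ₜ[k] (rco b (Δ (b s')) s)) := by
  rw [← key1 b y r s]
  have h1 : Δ (rco b (Δ (vc b y r)) s)
      = rco b ((Coalgebra.comul (R := k)).rTensor H (Δ (vc b y r))) s := by
    rw [rco_map]
  rw [h1, ← Coalgebra.coassoc_symm_apply (R := k)]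
  conv_lhs => rw [show (Coalgebra.comul (R := k)).lTensor H (Δ (vc b y r))
    = (Coalgebra.comul (R := k)).lTensor H
        ((rco b (Δ (vc b y r))).sum fun s' m => m ⊗ₜ[k] b s') by rw [← expand_r]]
  rw [Finsupp.sum, Finsupp.sum, map_sum, map_sum, map_sum, Finsupp.finset_sum_apply]
  refine Finset.sum_congr rfl fun s' _ => ?_
  rw [LinearMap.lTensor_tmul, rco_assoc_symm_tmul]

lemma comul_cc_left (b : Module.Basis B k H) (y : H) (r s : B) :
    Δ (cc b y r s) = (lco b (Δ (wc b y s))).sum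
      (fun r' m => (lco b (Δ (b r')) r) ⊗ₜ[k] m) := by
  have h1 : Δ (cc b y r s)
      = lco b ((Coalgebra.comul (R := k)).lTensor H (Δ (wc b y s))) r := by
    rw [cc, lco_map]
  rw [h1, ← Coalgebra.coassoc_apply (R := k)]
  conv_lhs => rw [show (Coalgebra.comul (R := k)).rTensor H (Δ (wc b y s))
    = (Coalgebra.comul (R := k)).rTensor H
        ((lco b (Δ (wc b y s))).sum fun r' m => (b r') ⊗ₜ[k] m) by rw [← expand_l]]
  rw [Finsupp.sum, Finsupp.sum, map_sum, map_sum, map_sum, Finsupp.finset_sum_apply]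
  refine Finset.sum_congr rfl fun r' _ => ?_
  rw [LinearMap.rTensor_tmul, lco_assoc_tmul]

-- π-trick: D ⊗ H ∩ H ⊗ D = D ⊗ D
lemma mem_range_map_subtype (D : Submodule k H) (z : H ⊗[k] H)
    (h1 : z ∈ LinearMap.range ((D.subtype).rTensor H))
    (h2 : z ∈ LinearMap.range ((D.subtype).lTensor H)) :
    z ∈ LinearMap.range (TensorProduct.map D.subtype D.subtype) := by
  obtain ⟨q, hq⟩ := Submodule.exists_isCompl D
  set π : H →ₗ[k] D := D.linearProjOfIsCompl q hq with hπ
  have hπι : π ∘ₗ D.subtype = LinearMap.id := by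
    ext d
    simp only [LinearMap.comp_apply, Submodule.subtype_apply, LinearMap.id_apply, hπ]
    exact congrArg Subtype.val (Submodule.linearProjOfIsCompl_apply_left hq d)
  set p : H →ₗ[k] H := D.subtype ∘ₗ π with hp
  have hpι : p ∘ₗ D.subtype = D.subtype := by
    rw [hp, LinearMap.comp_assoc, hπι, LinearMap.comp_id]
  obtain ⟨u, hu⟩ := h1
  obtain ⟨u', hu'⟩ := h2
  have e1 : (p.rTensor H) z = z := by
    rw [← hu, ← LinearMap.comp_apply, ← LinearMap.rTensor_comp, hpι]
  have e2 : (p.lTensor H) z = z := by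
    rw [← hu', ← LinearMap.comp_apply, ← LinearMap.lTensor_comp, hpι]
  have e3 : (TensorProduct.map p p) z = z := by
    have : TensorProduct.map p p = (p.rTensor H) ∘ₗ (p.lTensor H) := by
      rw [LinearMap.rTensor_comp_lTensor]
    rw [this, LinearMap.comp_apply, e2, e1]
  have : TensorProduct.map p p
      = (TensorProduct.map D.subtype D.subtype) ∘ₗ (TensorProduct.map π π) := by
    rw [← TensorProduct.map_comp]
  exact ⟨TensorProduct.map π π z, by rw [← LinearMap.comp_apply, ← this, e3]⟩

variable (b : Module.Basis B k H) (y : H)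

/-- The coefficient subspace of `y`. -/
def Dspace : Submodule k H :=
  Submodule.span k (Set.range fun p : B × B => cc b y p.1 p.2)

lemma cc_mem_D (r s : B) : cc b y r s ∈ Dspace b y :=
  Submodule.subset_span ⟨(r, s), rfl⟩

lemma comul_D_mem (x : H) (hx : x ∈ Dspace b y) :
    Δ x ∈ LinearMap.range (TensorProduct.map (Dspace b y).subtype (Dspace b y).subtype) := by
  induction hx using Submodule.span_induction with
  | mem x hx =>
      obtain ⟨⟨r, s⟩, rfl⟩ := hx
      refine mem_range_map_subtype _ _ ?_ ?_
      · rw [comul_cc_right b y r s, Finsupp.sum]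
        refine Submodule.sum_mem _ fun s' hs' => ?_
        have hm : rco b (Δ (vc b y r)) s' ∈ Dspace b y := by
          rw [key1]; exact cc_mem_D b y r s'
        refine ⟨(⟨rco b (Δ (vc b y r)) s', hm⟩ : Dspace b y) ⊗ₜ[k] (rco b (Δ (b s')) s), ?_⟩
        rw [LinearMap.rTensor_tmul, Submodule.subtype_apply]
      · rw [comul_cc_left b y r s, Finsupp.sum]
        refine Submodule.sum_mem _ fun r' hr' => ?_
        have hm : lco b (Δ (wc b y s)) r' ∈ Dspace b y := cc_mem_D b y r' s
        refine ⟨(lco b (Δ (b r')) r) ⊗ₜ[k] (⟨lco b (Δ (wc b y s)) r', hm⟩ : Dspace b y), ?_⟩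
        rw [LinearMap.lTensor_tmul, Submodule.subtype_apply]
  | zero => simp
  | add u v _ _ hu hv => rw [map_add]; exact Submodule.add_mem _ hu hv
  | smul a u _ hu => rw [map_smul]; exact Submodule.smul_mem _ a hu

lemma finite_D : FiniteDimensional k (Dspace b y) := by
  apply FiniteDimensional.span_of_finite
  have hsub : (Set.range fun p : B × B => cc b y p.1 p.2) ⊆
      insert 0 (⋃ s ∈ ((wc b y).support : Set B),
        (fun r => cc b y r s) '' ((lco b (Δ (wc b y s))).support : Set B)) := by
    rintro _ ⟨⟨r, s⟩, rfl⟩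
    by_cases h0 : cc b y r s = 0
    · exact Set.mem_insert_iff.mpr (Or.inl h0)
    · refine Set.mem_insert_of_mem _ ?_
      have hs : s ∈ (wc b y).support := by
        rw [Finsupp.mem_support_iff]
        intro hws
        apply h0
        rw [cc, hws, map_zero, map_zero]
        rfl
      refine Set.mem_biUnion hs ?_
      refine ⟨r, ?_, rfl⟩
      rw [Finset.mem_coe, Finsupp.mem_support_iff]
      exact h0
  refine Set.Finite.subset ?_ hsub
  refine Set.Finite.insert 0 ?_
  exact Set.Finite.biUnion (Finset.finite_toSet _)
    (fun s _ => Set.Finite.image _ (Finset.finite_toSet _))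

lemma y_mem_D : y ∈ Dspace b y := by
  have hw : ∀ s : B, wc b y s ∈ Dspace b y := by
    intro s
    have e := congrArg (fun z : H ⊗[k] H =>
        (TensorProduct.lid k H) (((Coalgebra.counit (R := k) (A := H)).rTensor H) z))
      (expand_l_finset b (Δ (wc b y s)))
    simp only [map_sum, Coalgebra.rTensor_counit_comul (R := k), TensorProduct.lid_tmul,
      one_smul, LinearMap.rTensor_tmul] at e
    have hmem := Submodule.sum_mem (Dspace b y)
      (fun r (_ : r ∈ ((lco b) (Δ (wc b y s))).support) =>
        Submodule.smul_mem _ (Coalgebra.counit (R := k) (b r))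
          (show lco b (Coalgebra.comul (R := k) ((wc b y) s)) r ∈ Dspace b y from
            cc_mem_D b y r s))
    rwa [← e] at hmem
  have e := congrArg (fun z : H ⊗[k] H =>
      (TensorProduct.rid k H) (((Coalgebra.counit (R := k) (A := H)).lTensor H) z))
    (expand_r_finset b (Δ y))
  simp only [map_sum, Coalgebra.lTensor_counit_comul (R := k), TensorProduct.rid_tmul,
    one_smul, LinearMap.lTensor_tmul] at e
  have hmem := Submodule.sum_mem (Dspace b y)
    (fun s (_ : s ∈ ((rco b) (Δ y)).support) =>
      Submodule.smul_mem _ (Coalgebra.counit (R := k) (b s))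
        (show rco b (Coalgebra.comul (R := k) y) s ∈ Dspace b y from hw s))
  rwa [← e] at hmem

end FTC

section Extraction
variable {H : Type*} [AddCommGroup H] [Module k H]

lemma extraction {n : ℕ} (c : Fin n → H) (φ : Fin n → (H →ₗ[k] k))
    (hφ : ∀ j i, φ j (c i) = if i = j then (1:k) else 0)
    {V : Type*} [AddCommGroup V] [Module k V] (A C : Fin n → V)
    (h : ∑ j, c j ⊗ₜ[k] A j = ∑ j, c j ⊗ₜ[k] C j) (j : Fin n) : A j = C j := by
  have e := congrArg (fun z : H ⊗[k] V => (TensorProduct.lid k V) (((φ j).rTensor V) z)) h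
  simp only [map_sum, LinearMap.rTensor_tmul, TensorProduct.lid_tmul, hφ] at e
  simpa [ite_smul, Finset.sum_ite_eq'] using e

end Extraction

section Main
variable {H : Type*} [AddCommGroup H] [Module k H] [Coalgebra k H]

theorem exists_comatrix (y : H) :
    ∃ (n : ℕ) (d : Fin n → Fin n → H),
      (∀ i j, Coalgebra.comul (R := k) (d i j) = ∑ l, d i l ⊗ₜ[k] d l j) ∧
      (∀ i j, Coalgebra.counit (R := k) (d i j) = if i = j then (1:k) else 0) ∧
      y ∈ Submodule.span k (Set.range fun p : Fin n × Fin n => d p.1 p.2) := by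
  classical
  let b : Module.Basis (Module.Basis.ofVectorSpaceIndex k H) k H := Module.Basis.ofVectorSpace k H
  have hfin : FiniteDimensional k (Dspace b y) := finite_D b y
  set D := Dspace b y with hDdef
  let n : ℕ := Module.finrank k D
  let bas : Module.Basis (Fin n) k D := Module.finBasis k D
  let c : Fin n → H := fun i => ((bas i : D) : H)
  have hci : ∀ i, c i ∈ D := fun i => (bas i).2
  have hu0 : ∀ i, ∃ uu : (D : Submodule k H) ⊗[k] (D : Submodule k H),
      (TensorProduct.map D.subtype D.subtype) uu = Coalgebra.comul (R := k) (c i) :=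
    fun i => LinearMap.mem_range.mp (comul_D_mem b y (c i) (hci i))
  choose u hu using hu0
  let dD : Fin n → Fin n → D := fun i j => lco (M := D) bas (u i) j
  have hexp : ∀ i, u i = ∑ j : Fin n, (bas j) ⊗ₜ[k] (dD i j) := by
    intro i
    refine (expand_l_finset (b := bas) (u i)).trans ?_
    refine Finset.sum_subset (Finset.subset_univ _) fun j _ hj => ?_
    rw [show lco (M := D) bas (u i) j = 0 from Finsupp.notMem_support_iff.mp hj,
      TensorProduct.tmul_zero]
  let d : Fin n → Fin n → H := fun i j => ((dD j i : D) : H)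
  have hΔc : ∀ i, Coalgebra.comul (R := k) (c i) = ∑ j, c j ⊗ₜ[k] d j i := by
    intro i
    rw [← hu i, hexp i, map_sum]
    refine Finset.sum_congr rfl fun j _ => ?_
    rw [TensorProduct.map_tmul]
    rfl
  -- dual functionals
  obtain ⟨qc, hqc⟩ := Submodule.exists_isCompl D
  let π : H →ₗ[k] D := D.linearProjOfIsCompl qc hqc
  let φ : Fin n → (H →ₗ[k] k) := fun j => (bas.coord j) ∘ₗ π
  have hφ : ∀ j i, φ j (c i) = if i = j then (1:k) else 0 := by
    intro j i
    show bas.coord j (π (c i)) = _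
    rw [show π (c i) = bas i from Submodule.linearProjOfIsCompl_apply_left hqc (bas i),
      Module.Basis.coord_apply, Module.Basis.repr_self, Finsupp.single_apply]
  -- counit identities
  have hεd : ∀ i j, Coalgebra.counit (R := k) (d i j) = if i = j then (1:k) else 0 := by
    intro i j
    have h := Coalgebra.lTensor_counit_comul (R := k) (c j)
    rw [hΔc j, map_sum] at h
    simp only [LinearMap.lTensor_tmul] at h
    have h2 : ∑ i, c i ⊗ₜ[k] (Coalgebra.counit (R := k) (d i j))
        = ∑ i, c i ⊗ₜ[k] (if i = j then (1:k) else 0) := by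
      rw [h]
      have : ∀ i : Fin n, c i ⊗ₜ[k] (if i = j then (1:k) else 0)
          = if i = j then c j ⊗ₜ[k] (1:k) else 0 := by
        intro i
        by_cases hij : i = j <;> simp [hij]
      rw [Finset.sum_congr rfl fun i _ => this i, Finset.sum_ite_eq' Finset.univ j]
      simp
    exact extraction c φ hφ _ _ h2 i
  -- comatrix comultiplication identities
  have hΔd : ∀ l j, Coalgebra.comul (R := k) (d l j) = ∑ i, d l i ⊗ₜ[k] d i j := by
    intro l j
    have h := Coalgebra.coassoc_apply (R := k) (c j)
    rw [hΔc j] at h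
    simp only [map_sum, LinearMap.rTensor_tmul, LinearMap.lTensor_tmul] at h
    have hL : ∀ i, (TensorProduct.assoc k H H H) ((Coalgebra.comul (R := k) (c i)) ⊗ₜ[k] d i j)
        = ∑ l', c l' ⊗ₜ[k] (d l' i ⊗ₜ[k] d i j) := by
      intro i
      rw [hΔc i, TensorProduct.sum_tmul, map_sum]
      exact Finset.sum_congr rfl fun l' _ => TensorProduct.assoc_tmul _ _ _
    rw [Finset.sum_congr rfl fun i _ => hL i, Finset.sum_comm] at h
    have h2 : ∑ l', c l' ⊗ₜ[k] (∑ i, d l' i ⊗ₜ[k] d i j)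
        = ∑ l', c l' ⊗ₜ[k] (Coalgebra.comul (R := k) (d l' j)) := by
      rw [← h]
      exact Finset.sum_congr rfl fun l' _ => TensorProduct.tmul_sum _ _ _
    exact (extraction c φ hφ _ _ h2 l).symm
  -- span
  have hcspan : ∀ i, c i ∈ Submodule.span k (Set.range fun p : Fin n × Fin n => d p.1 p.2) := by
    intro i
    have h := Coalgebra.rTensor_counit_comul (R := k) (c i)
    rw [hΔc i, map_sum] at h
    simp only [LinearMap.rTensor_tmul] at h
    have e := congrArg (TensorProduct.lid k H) h
    simp only [map_sum, TensorProduct.lid_tmul, one_smul] at e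
    rw [← e]
    exact Submodule.sum_mem _ fun j _ =>
      Submodule.smul_mem _ _ (Submodule.subset_span ⟨(j, i), rfl⟩)
  refine ⟨n, d, hΔd, hεd, ?_⟩
  have hy : y ∈ D := y_mem_D b y
  have hrepr := Module.Basis.sum_repr bas ⟨y, hy⟩
  have e := congrArg (Submodule.subtype D) hrepr
  simp only [map_sum, map_smul, Submodule.subtype_apply] at e
  rw [← e]
  exact Submodule.sum_mem _ fun i _ => Submodule.smul_mem _ _ (hcspan i)

end Main
end ComatrixAux

end ComatrixSection

section MainProofSection
variable {k : Type*} [Field k] {H : Type*} [Ring H] [HopfAlgebra k H]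
  {A : Type*} [CommRing A] [HopfAlgebra k A]
  {Hab : Type*} [CommRing Hab] [HopfAlgebra k Hab]

lemma coactS_t_comatrix (F : FreeCommHopfData k H A) (qt : A →ₐc[k] Hab)
    {n : ℕ} (d : Fin n → Fin n → H)
    (hcomul : ∀ i j, Coalgebra.comul (R := k) (d i j) = ∑ l, d i l ⊗ₜ[k] d l j) (i j : Fin n) :
    coactS qt (F.t (d i j)) = ∑ l, F.t (d i l) ⊗ₜ[k] qt (F.t (d l j)) := by
  simp only [coactS, AlgHom.coe_comp, Function.comp_apply, Bialgebra.comulAlgHom_apply]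
  rw [F.comul_t, hcomul i j, map_sum, map_sum]
  refine Finset.sum_congr rfl fun l _ => ?_
  rw [TensorProduct.map_tmul, Algebra.TensorProduct.map_tmul]
  simp

lemma system_facts (F : FreeCommHopfData k H A) (hab : HabData k H Hab)
    (qt : A →ₐc[k] Hab) (hqt : ∀ x : H, qt (F.t x) = hab.q x)
    {n : ℕ} (d : Fin n → Fin n → H)
    (hcomul : ∀ i j, Coalgebra.comul (R := k) (d i j) = ∑ l, d i l ⊗ₜ[k] d l j)
    (hcounit : ∀ i j, Coalgebra.counit (R := k) (d i j) = if i = j then (1:k) else 0) :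
    (Matrix.of fun i j => F.t (d i j)).det * (Matrix.of fun i j => F.tinv (d i j)).det = 1 ∧
    (Matrix.of fun i j => F.t (d i j)).det ∈ Algebra.adjoin k (Set.range F.t) ∧
    (∀ i j, F.tinv (d i j) * (Matrix.of fun i j => F.t (d i j)).det
      ∈ Algebra.adjoin k (Set.range F.t)) ∧
    coactS qt (Matrix.of fun i j => F.t (d i j)).det
      = (Matrix.of fun i j => F.t (d i j)).det ⊗ₜ[k]
          (Matrix.of fun i j => hab.q (d i j)).det := by
  classical
  set T : Matrix (Fin n) (Fin n) A := Matrix.of fun i j => F.t (d i j) with hT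
  set U : Matrix (Fin n) (Fin n) A := Matrix.of fun i j => F.tinv (d i j) with hU
  have hTU : T * U = 1 := by
    ext i j
    rw [Matrix.mul_apply, Matrix.one_apply]
    have h := F.mul_t_tinv (d i j)
    rw [hcomul i j, map_sum, map_sum] at h
    simp only [TensorProduct.map_tmul, LinearMap.mul'_apply] at h
    rw [hcounit i j] at h
    rw [hT, hU]
    simp only [Matrix.of_apply]
    rw [h]
    by_cases hij : i = j <;> simp [hij]
  have hUT : U * T = 1 := by
    ext i j
    rw [Matrix.mul_apply, Matrix.one_apply]
    have h := F.mul_tinv_t (d i j)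
    rw [hcomul i j, map_sum, map_sum] at h
    simp only [TensorProduct.map_tmul, LinearMap.mul'_apply] at h
    rw [hcounit i j] at h
    rw [hU, hT]
    simp only [Matrix.of_apply]
    rw [h]
    by_cases hij : i = j <;> simp [hij]
  have hdet1 : T.det * U.det = 1 := by
    rw [← Matrix.det_mul, hTU, Matrix.det_one]
  set R0 := Algebra.adjoin k (Set.range F.t) with hR0
  set TR : Matrix (Fin n) (Fin n) R0 :=
    Matrix.of (fun i j => (⟨F.t (d i j), Algebra.subset_adjoin ⟨d i j, rfl⟩⟩ : R0)) with hTR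
  have hmap : (Subalgebra.val R0).toRingHom.mapMatrix TR = T := by
    ext i j
    rfl
  have hdet_mem : T.det ∈ R0 := by
    have : T.det = (Subalgebra.val R0) TR.det := by
      rw [← hmap, ← RingHom.map_det]
      rfl
    rw [this]
    exact (TR.det).2
  have hadjU : T.adjugate = T.det • U := by
    calc T.adjugate = T.adjugate * (T * U) := by rw [hTU, mul_one]
      _ = (T.adjugate * T) * U := by rw [mul_assoc]
      _ = (T.det • (1 : Matrix (Fin n) (Fin n) A)) * U := by rw [Matrix.adjugate_mul]
      _ = T.det • U := by rw [Matrix.smul_mul, Matrix.one_mul]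
  have hadj_mem : ∀ i j, T.adjugate i j ∈ R0 := by
    intro i j
    have : T.adjugate = (Subalgebra.val R0).toRingHom.mapMatrix TR.adjugate := by
      rw [RingHom.map_adjugate, hmap]
    rw [this, RingHom.mapMatrix_apply, Matrix.map_apply]
    exact (TR.adjugate i j).2
  have hclear : ∀ i j, F.tinv (d i j) * T.det ∈ R0 := by
    intro i j
    have : F.tinv (d i j) * T.det = T.adjugate i j := by
      rw [hadjU, Matrix.smul_apply, smul_eq_mul, mul_comm]
      rfl
    rw [this]
    exact hadj_mem i j
  -- coaction of the determinant
  set Qh : Matrix (Fin n) (Fin n) Hab := Matrix.of fun i j => hab.q (d i j) with hQh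
  have hδmat : (coactS qt).toRingHom.mapMatrix T
      = ((Algebra.TensorProduct.includeLeft (R := k) (S := k)
            : A →ₐ[k] A ⊗[k] Hab).toRingHom.mapMatrix T)
        * ((Algebra.TensorProduct.includeRight (R := k)
            : Hab →ₐ[k] A ⊗[k] Hab).toRingHom.mapMatrix Qh) := by
    ext i j
    rw [Matrix.mul_apply]
    simp only [RingHom.mapMatrix_apply, Matrix.map_apply, AlgHom.toRingHom_eq_coe,
      RingHom.coe_coe]
    have hent : coactS qt (T i j) = ∑ l, F.t (d i l) ⊗ₜ[k] hab.q (d l j) := by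
      rw [show T i j = F.t (d i j) from rfl, coactS_t_comatrix F qt d hcomul i j]
      exact Finset.sum_congr rfl fun l _ => by rw [hqt]
    rw [hent]
    refine Finset.sum_congr rfl fun l _ => ?_
    rw [Algebra.TensorProduct.includeLeft_apply, Algebra.TensorProduct.includeRight_apply,
      Algebra.TensorProduct.tmul_mul_tmul, mul_one, one_mul]
    rfl
  have hcoact : coactS qt T.det = T.det ⊗ₜ[k] Qh.det := by
    have h1 : coactS qt T.det = ((coactS qt).toRingHom.mapMatrix T).det := by
      rw [← RingHom.map_det]
      rfl
    rw [h1, hδmat, Matrix.det_mul, ← RingHom.map_det, ← RingHom.map_det]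
    simp only [AlgHom.toRingHom_eq_coe, RingHom.coe_coe,
      Algebra.TensorProduct.includeLeft_apply, Algebra.TensorProduct.includeRight_apply,
      Algebra.TensorProduct.tmul_mul_tmul, mul_one, one_mul]
  exact ⟨hdet1, hdet_mem, hclear, hcoact⟩

end MainProofSection

section MainProofSection2
variable {k : Type*} [Field k] {H : Type*} [Ring H] [HopfAlgebra k H]
  {A : Type*} [CommRing A] [HopfAlgebra k A]
  {Hab : Type*} [CommRing Hab] [HopfAlgebra k Hab]

lemma comatrix_clearing (F : FreeCommHopfData k H A) (hab : HabData k H Hab)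
    (qt : A →ₐc[k] Hab) (hqt : ∀ x : H, qt (F.t x) = hab.q x)
    {n : ℕ} (d : Fin n → Fin n → H)
    (hcomul : ∀ i j, Coalgebra.comul (R := k) (d i j) = ∑ l, d i l ⊗ₜ[k] d l j)
    (hcounit : ∀ i j, Coalgebra.counit (R := k) (d i j) = if i = j then (1:k) else 0) :
    ∃ m : A, m ∈ Algebra.adjoin k (Set.range F.t) ∧ m ∈ coinvCH qt ∧
      (∃ u : A, m * u = 1 ∧ u ∈ coinvCH qt) ∧
      ∀ i j, F.tinv (d i j) * m ∈ Algebra.adjoin k (Set.range F.t) := by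
  classical
  obtain ⟨hdet1, hmem, hclear, hcoact⟩ := system_facts F hab qt hqt d hcomul hcounit
  set d' : Fin n → Fin n → H := fun i j => HopfAlgebra.antipode (R := k) (d j i) with hd'
  have hcomul' : ∀ i j, Coalgebra.comul (R := k) (d' i j) = ∑ l, d' i l ⊗ₜ[k] d' l j := by
    intro i j
    rw [show d' i j = HopfAlgebra.antipode (R := k) (d j i) from rfl,
      comul_antipode' (d j i), hcomul j i, map_sum, map_sum]
    refine Finset.sum_congr rfl fun l _ => ?_
    rw [TensorProduct.comm_tmul, TensorProduct.map_tmul]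
  have hcounit' : ∀ i j, Coalgebra.counit (R := k) (d' i j) = if i = j then (1:k) else 0 := by
    intro i j
    rw [show d' i j = HopfAlgebra.antipode (R := k) (d j i) from rfl,
      counit_antipode' (d j i), hcounit j i]
    by_cases hij : i = j
    · simp [hij]
    · rw [if_neg (fun hji => hij hji.symm), if_neg hij]
  obtain ⟨hdet1', hmem', hclear', hcoact'⟩ := system_facts F hab qt hqt d' hcomul' hcounit'
  -- the two group-like determinants are inverse to each other
  have hQQ : (Matrix.of fun i j => hab.q (d i j)) *
      (Matrix.of fun i j => hab.q (d' i j)).transpose = 1 := by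
    ext i j
    rw [Matrix.mul_apply, Matrix.one_apply]
    have hS := HopfAlgebra.mul_antipode_lTensor_comul_apply (R := k) (d i j)
    rw [hcomul i j, map_sum, map_sum] at hS
    simp only [LinearMap.lTensor_tmul, LinearMap.mul'_apply] at hS
    have h2 := congrArg (hab.q) hS
    rw [map_sum] at h2
    simp only [map_mul] at h2
    rw [hcounit i j, AlgHomClass.commutes] at h2
    have hgoal : (∑ l, (Matrix.of fun i j => hab.q (d i j)) i l *
        ((Matrix.of fun i j => hab.q (d' i j)).transpose) l j)
        = ∑ l, hab.q (d i l) * hab.q (HopfAlgebra.antipode (R := k) (d l j)) := rfl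
    rw [hgoal, h2]
    by_cases hij : i = j <;> simp [hij]
  have hdetQQ : (Matrix.of fun i j => hab.q (d i j)).det *
      (Matrix.of fun i j => hab.q (d' i j)).det = 1 := by
    have h := congrArg Matrix.det hQQ
    rwa [Matrix.det_mul, Matrix.det_transpose, Matrix.det_one] at h
  set Dt := (Matrix.of fun i j => F.t (d i j)).det with hDt
  set Dt' := (Matrix.of fun i j => F.t (d' i j)).det with hDt'
  set Du := (Matrix.of fun i j => F.tinv (d i j)).det with hDu
  set Du' := (Matrix.of fun i j => F.tinv (d' i j)).det with hDu'
  have hmcoact : coactS qt (Dt * Dt') = (Dt * Dt') ⊗ₜ[k] (1 : Hab) := by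
    rw [map_mul, hcoact, hcoact', Algebra.TensorProduct.tmul_mul_tmul, hdetQQ]
  have hmco : Dt * Dt' ∈ coinvCH qt := by
    rw [coinvCH, AlgHom.mem_equalizer, hmcoact, Algebra.TensorProduct.includeLeft_apply]
  have hmu : (Dt * Dt') * (Du * Du') = 1 := by
    rw [mul_mul_mul_comm, hdet1, hdet1', one_mul]
  have huco : Du * Du' ∈ coinvCH qt := by
    rw [coinvCH, AlgHom.mem_equalizer, Algebra.TensorProduct.includeLeft_apply]
    have h1 : ((Dt * Dt') ⊗ₜ[k] (1 : Hab)) * coactS qt (Du * Du') = 1 := by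
      rw [← hmcoact, ← map_mul, hmu, map_one]
    have h2 : ((Dt * Dt') ⊗ₜ[k] (1 : Hab)) * ((Du * Du') ⊗ₜ[k] (1 : Hab)) = 1 := by
      rw [Algebra.TensorProduct.tmul_mul_tmul, hmu, mul_one, ← Algebra.TensorProduct.one_def]
    calc coactS qt (Du * Du')
        = (((Dt * Dt') ⊗ₜ[k] (1 : Hab)) * ((Du * Du') ⊗ₜ[k] (1 : Hab)))
            * coactS qt (Du * Du') := by rw [h2, one_mul]
      _ = ((Du * Du') ⊗ₜ[k] (1 : Hab))
            * (((Dt * Dt') ⊗ₜ[k] (1 : Hab)) * coactS qt (Du * Du')) := by ring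
      _ = (Du * Du') ⊗ₜ[k] (1 : Hab) := by rw [h1, mul_one]
  refine ⟨Dt * Dt', mul_mem hmem hmem', hmco, ⟨Du * Du', hmu, huco⟩, ?_⟩
  intro i j
  rw [← mul_assoc]
  exact mul_mem (hclear i j) hmem'

lemma tinv_clearable (F : FreeCommHopfData k H A) (hab : HabData k H Hab)
    (qt : A →ₐc[k] Hab) (hqt : ∀ x : H, qt (F.t x) = hab.q x) (y : H) :
    ∃ m : A, m ∈ Algebra.adjoin k (Set.range F.t) ∧ m ∈ coinvCH qt ∧
      (∃ u : A, m * u = 1 ∧ u ∈ coinvCH qt) ∧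
      F.tinv y * m ∈ Algebra.adjoin k (Set.range F.t) := by
  obtain ⟨n, d, hcomul, hcounit, hspan⟩ := ComatrixAux.exists_comatrix (k := k) y
  obtain ⟨m, hm0, hm1, hminv, hclear⟩ := comatrix_clearing F hab qt hqt d hcomul hcounit
  refine ⟨m, hm0, hm1, hminv, ?_⟩
  obtain ⟨coef, hcoef⟩ := (Submodule.mem_span_range_iff_exists_fun k).mp hspan
  have hexp : F.tinv y = ∑ p : Fin n × Fin n, coef p • F.tinv (d p.1 p.2) := by
    rw [← hcoef, map_sum]
    exact Finset.sum_congr rfl fun p _ => by rw [map_smul]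
  rw [hexp, Finset.sum_mul]
  refine sum_mem fun p _ => ?_
  rw [smul_mul_assoc]
  exact Subalgebra.smul_mem _ (hclear p.1 p.2) _

end MainProofSection2

/-- `C_H`, the algebra of right `H_ab`-coinvariants of `S(t_H)_Θ`, is a localization
of the subalgebra `S(t_H)^{co-H_ab}` of right `H_ab`-coinvariants of `S(t_H)`. -/
theorem stmt_5 (k : Type*) [Field k] (H : Type*) [Ring H] [HopfAlgebra k H]
    (A : Type*) [CommRing A] [HopfAlgebra k A] (F : FreeCommHopfData k H A)
    (Hab : Type*) [CommRing Hab] [HopfAlgebra k Hab] (hab : HabData k H Hab)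
    (qt : A →ₐc[k] Hab) (hqt : ∀ x : H, qt (F.t x) = hab.q x) :
    IsLocalizationOfSet
      {a : A | a ∈ Algebra.adjoin k (Set.range F.t) ∧ a ∈ coinvCH qt}
      ((coinvCH qt : Subalgebra k A) : Set A) := by
  classical
  set R0 := Algebra.adjoin k (Set.range F.t) with hR0
  let M0 : Submonoid A :=
  { carrier := {m : A | m ∈ R0 ∧ m ∈ coinvCH qt ∧ ∃ u : A, m * u = 1 ∧ u ∈ coinvCH qt}
    one_mem' := ⟨one_mem _, one_mem _, 1, mul_one 1, one_mem _⟩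
    mul_mem' := by
      rintro a b ⟨ha0, ha1, ua, hua, hua'⟩ ⟨hb0, hb1, ub, hub, hub'⟩
      exact ⟨mul_mem ha0 hb0, mul_mem ha1 hb1, ua * ub,
        by rw [mul_mul_mul_comm, hua, hub, one_mul], mul_mem hua' hub'⟩ }
  have main : ∀ b : A, ∃ m ∈ M0, b * m ∈ R0 := by
    intro b
    have hb : b ∈ Algebra.adjoin k (Set.range F.t ∪ Set.range F.tinv) := by
      rw [F.adjoin_eq_top]
      exact Algebra.mem_top
    induction hb using Algebra.adjoin_induction with
    | mem x hx =>
        rcases hx with ⟨y, rfl⟩ | ⟨y, rfl⟩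
        · exact ⟨1, M0.one_mem, by rw [mul_one]; exact Algebra.subset_adjoin ⟨y, rfl⟩⟩
        · obtain ⟨m, hm0, hm1, hminv, hclear⟩ := tinv_clearable F hab qt hqt y
          exact ⟨m, ⟨hm0, hm1, hminv⟩, hclear⟩
    | algebraMap r =>
        exact ⟨1, M0.one_mem, by rw [mul_one]; exact Subalgebra.algebraMap_mem R0 r⟩
    | add x y hx hy ihx ihy =>
        obtain ⟨m1, hm1, h1⟩ := ihx
        obtain ⟨m2, hm2, h2⟩ := ihy
        refine ⟨m1 * m2, mul_mem hm1 hm2, ?_⟩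
        have hexp : (x + y) * (m1 * m2) = (x * m1) * m2 + (y * m2) * m1 := by ring
        rw [hexp]
        exact add_mem (mul_mem h1 hm2.1) (mul_mem h2 hm1.1)
    | mul x y hx hy ihx ihy =>
        obtain ⟨m1, hm1, h1⟩ := ihx
        obtain ⟨m2, hm2, h2⟩ := ihy
        refine ⟨m1 * m2, mul_mem hm1 hm2, ?_⟩
        have hexp : (x * y) * (m1 * m2) = (x * m1) * (y * m2) := by ring
        rw [hexp]
        exact mul_mem h1 h2
  refine ⟨fun a ha => ha.2, M0, fun m hm => ⟨hm.1, hm.2.1⟩, ?_, ?_⟩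
  · rintro m ⟨hm0, hm1, u, hu, hu'⟩
    exact ⟨u, hu', hu⟩
  · intro b hb
    obtain ⟨m, hm, hbm⟩ := main b
    exact ⟨m, hm, hbm, mul_mem hb hm.2.1⟩

end
end

section
/- Let G be a finite group and Ḡ a nontrivial finite abelian group with primary decomposition Ḡ = Z/p_1^{e_1} × ⋯ × Z/p_r^{e_r} (p_i primes, e_i ≥ 1), and let g ↦ ḡ be a surjective group homomorphism G → Ḡ. For 1 ≤ i ≤ r let s_i be a generator of the summand Z/p_i^{e_i} and fix σ_i ∈ G with σ̄_i = s_i. Let Z^G be the free abelian group on symbols t_g (g ∈ G), with homomorphism Z^G → Ḡ, t_g ↦ ḡ, and let Y be its kernel. For each g ∈ G write ḡ = s_1^{f_1(g)} ⋯ s_r^{f_r(g)} with 0 ≤ f_i(g) < p_i^{e_i}, and for g different from the identity e and from σ_1, …, σ_r set u_g = t_g · Π_{i : f_i(g) ≠ 0} t_{σ_i}^{p_i^{e_i} − f_i(g)} (written multiplicatively). Then the set consisting of t_e, t_{σ_1}^{p_1^{e_1}}, …, t_{σ_r}^{p_r^{e_r}}, together with the elements u_g, forms a basis of the free abelian group Y.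 -/
open TensorProduct

noncomputable section

variable {k : Type*} [Field k]

/-- Let `G → Ḡ = ℤ/p₁^{e₁} × ⋯ × ℤ/p_r^{e_r}` be a surjection onto a nontrivial
finite abelian group, `Y ⊆ ℤ^G` the kernel of `t_g ↦ ḡ`.  With `σᵢ ∈ G` chosen so that
`σ̄ᵢ = sᵢ` (the `i`-th standard generator) and `fᵢ(g)` the exponents of `ḡ`, the elements
`t_e`, `t_{σᵢ}^{pᵢ^{eᵢ}}` and `u_g = t_g ∏_{fᵢ(g) ≠ 0} t_{σᵢ}^{pᵢ^{eᵢ} − fᵢ(g)}`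
(for `g ≠ e, σ₁, …, σ_r`) form a basis of the free abelian group `Y`
(written additively: `ℤ^G = G →₀ ℤ`). -/
theorem stmt_12 (G : Type*) [Group G] [Fintype G] [DecidableEq G]
    (r : ℕ) (hr : 1 ≤ r) (p e : Fin r → ℕ) (hp : ∀ i, (p i).Prime) (he : ∀ i, 1 ≤ e i)
    (π : G → ∀ i : Fin r, ZMod (p i ^ e i))
    (hπ1 : π 1 = 0) (hπmul : ∀ g h : G, π (g * h) = π g + π h)
    (hπsurj : Function.Surjective π)
    (σ : Fin r → G) (hσ : ∀ i, π (σ i) = Pi.single i 1) :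
    LinearIndependent ℤ
      (fun j : Unit ⊕ Fin r ⊕ {g : G // g ≠ 1 ∧ ∀ i, g ≠ σ i} =>
        (match j with
          | Sum.inl _ => Finsupp.single (1 : G) (1 : ℤ)
          | Sum.inr (Sum.inl i) => Finsupp.single (σ i) ((p i ^ e i : ℕ) : ℤ)
          | Sum.inr (Sum.inr g) =>
              Finsupp.single g.1 (1 : ℤ) +
                ∑ i ∈ Finset.univ.filter (fun i : Fin r => ((π g.1) i).val ≠ 0),
                  Finsupp.single (σ i)
                    (((p i ^ e i : ℕ) : ℤ) - (((π g.1) i).val : ℤ)) : G →₀ ℤ)) ∧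
    Submodule.span ℤ
      (Set.range (fun j : Unit ⊕ Fin r ⊕ {g : G // g ≠ 1 ∧ ∀ i, g ≠ σ i} =>
        (match j with
          | Sum.inl _ => Finsupp.single (1 : G) (1 : ℤ)
          | Sum.inr (Sum.inl i) => Finsupp.single (σ i) ((p i ^ e i : ℕ) : ℤ)
          | Sum.inr (Sum.inr g) =>
              Finsupp.single g.1 (1 : ℤ) +
                ∑ i ∈ Finset.univ.filter (fun i : Fin r => ((π g.1) i).val ≠ 0),
                  Finsupp.single (σ i)
                    (((p i ^ e i : ℕ) : ℤ) - (((π g.1) i).val : ℤ)) : G →₀ ℤ))) =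
      LinearMap.ker (Finsupp.lsum ℤ
        (fun g : G => LinearMap.toSpanSingleton ℤ (∀ i : Fin r, ZMod (p i ^ e i)) (π g))) := by
  classical
  haveI hfact : ∀ i, Fact (1 < p i ^ e i) := fun i =>
    ⟨Nat.one_lt_pow (Nat.one_le_iff_ne_zero.mp (he i)) (hp i).one_lt⟩
  have hσ1 : ∀ i, σ i ≠ 1 := by
    intro i h
    have h2 := hσ i
    rw [h, hπ1] at h2
    have h3 := congrFun h2 i
    rw [Pi.single_eq_same, Pi.zero_apply] at h3
    exact one_ne_zero h3.symm
  have hσinj : Function.Injective σ := by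
    intro i j hij
    by_contra hne
    have h1 := hσ i
    rw [hij, hσ j] at h1
    have h2 := congrFun h1 i
    rw [Pi.single_eq_same, Pi.single_eq_of_ne hne] at h2
    exact one_ne_zero h2.symm
  set Φ := Finsupp.lsum ℤ (fun g : G => LinearMap.toSpanSingleton ℤ
      (∀ i : Fin r, ZMod (p i ^ e i)) (π g)) with hΦ
  have hΦs : ∀ (g : G) (n : ℤ), Φ (Finsupp.single g n) = n • π g := by
    intro g n
    rw [hΦ, Finsupp.lsum_single, LinearMap.toSpanSingleton_apply]
  set v : Unit ⊕ Fin r ⊕ {g : G // g ≠ 1 ∧ ∀ i, g ≠ σ i} → (G →₀ ℤ) := fun j =>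
    (match j with
      | Sum.inl _ => Finsupp.single (1 : G) (1 : ℤ)
      | Sum.inr (Sum.inl i) => Finsupp.single (σ i) ((p i ^ e i : ℕ) : ℤ)
      | Sum.inr (Sum.inr g) =>
          Finsupp.single g.1 (1 : ℤ) +
            ∑ i ∈ Finset.univ.filter (fun i : Fin r => ((π g.1) i).val ≠ 0),
              Finsupp.single (σ i)
                (((p i ^ e i : ℕ) : ℤ) - (((π g.1) i).val : ℤ)) : G →₀ ℤ) with hv
  have hv1 : v (Sum.inl ()) = Finsupp.single (1 : G) (1 : ℤ) := rfl
  have hv2 : ∀ i, v (Sum.inr (Sum.inl i)) = Finsupp.single (σ i) ((p i ^ e i : ℕ) : ℤ) :=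
    fun _ => rfl
  have hv3 : ∀ h : {g : G // g ≠ 1 ∧ ∀ i, g ≠ σ i}, v (Sum.inr (Sum.inr h)) =
      Finsupp.single h.1 (1 : ℤ) +
        ∑ i ∈ Finset.univ.filter (fun i : Fin r => ((π h.1) i).val ≠ 0),
          Finsupp.single (σ i) (((p i ^ e i : ℕ) : ℤ) - (((π h.1) i).val : ℤ)) :=
    fun _ => rfl
  -- evaluation of a linear combination at a point
  have hval : ∀ (c : (Unit ⊕ Fin r ⊕ {g : G // g ≠ 1 ∧ ∀ i, g ≠ σ i}) → ℤ) (x : G),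
      (∑ j, c j • v j) x =
      c (Sum.inl ()) * (if (1 : G) = x then (1 : ℤ) else 0)
      + (∑ i, c (Sum.inr (Sum.inl i)) * (if σ i = x then ((p i ^ e i : ℕ) : ℤ) else 0))
      + ∑ h : {g : G // g ≠ 1 ∧ ∀ i, g ≠ σ i}, c (Sum.inr (Sum.inr h)) *
          ((if h.1 = x then (1 : ℤ) else 0) +
            ∑ i ∈ Finset.univ.filter (fun i : Fin r => ((π h.1) i).val ≠ 0),
              (if σ i = x then ((p i ^ e i : ℕ) : ℤ) - (((π h.1) i).val : ℤ) else 0)) := by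
    intro c x
    rw [Finsupp.finset_sum_apply, Fintype.sum_sum_type, Fintype.sum_sum_type, ← add_assoc]
    congr 1
    · congr 1
      · rw [Finset.univ_unique, Finset.sum_singleton]
        rw [hv1, Finsupp.smul_apply, Finsupp.single_apply, smul_eq_mul, mul_ite, mul_one, mul_zero]
      · refine Finset.sum_congr rfl fun i _ => ?_
        rw [hv2, Finsupp.smul_apply, Finsupp.single_apply, smul_eq_mul, mul_ite, mul_zero]
    · refine Finset.sum_congr rfl fun h _ => ?_
      rw [hv3, Finsupp.smul_apply, smul_eq_mul, Finsupp.add_apply, Finsupp.single_apply,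
        Finsupp.finset_sum_apply]
      congr 2
      refine Finset.sum_congr rfl fun i _ => ?_
      rw [Finsupp.single_apply]
  -- the third block evaluated at a "generic" point h.1
  have hterm3 : ∀ (c : (Unit ⊕ Fin r ⊕ {g : G // g ≠ 1 ∧ ∀ i, g ≠ σ i}) → ℤ)
      (h : {g : G // g ≠ 1 ∧ ∀ i, g ≠ σ i}),
      (∑ h' : {g : G // g ≠ 1 ∧ ∀ i, g ≠ σ i}, c (Sum.inr (Sum.inr h')) *
          ((if h'.1 = h.1 then (1 : ℤ) else 0) +
            ∑ i ∈ Finset.univ.filter (fun i : Fin r => ((π h'.1) i).val ≠ 0),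
              (if σ i = h.1 then ((p i ^ e i : ℕ) : ℤ) - (((π h'.1) i).val : ℤ) else 0)))
        = c (Sum.inr (Sum.inr h)) := by
    intro c h
    rw [Finset.sum_eq_single h]
    · rw [if_pos rfl,
        Finset.sum_eq_zero (fun i _ => if_neg (fun hh => h.2.2 i hh.symm)), add_zero, mul_one]
    · intro b _ hb
      rw [if_neg (fun hh => hb (Subtype.ext hh)),
        Finset.sum_eq_zero (fun i _ => if_neg (fun hh => h.2.2 i hh.symm)), add_zero, mul_zero]
    · intro hmem; exact absurd (Finset.mem_univ h) hmem
  -- every basis vector lies in the kernel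
  have hker : ∀ j, Φ (v j) = 0 := by
    rintro (j | i | h)
    · rw [hv1, hΦs, hπ1, smul_zero]
    · rw [hv2, hΦs, hσ i]
      funext j
      rw [Pi.smul_apply, Pi.zero_apply]
      by_cases hji : j = i
      · subst hji
        rw [Pi.single_eq_same, zsmul_one, Int.cast_natCast, ZMod.natCast_self]
      · rw [Pi.single_eq_of_ne hji, smul_zero]
    · rw [hv3, map_add, map_sum, hΦs, one_smul]
      have hsum : ∀ i ∈ Finset.univ.filter (fun i : Fin r => ((π h.1) i).val ≠ 0),
          Φ (Finsupp.single (σ i) (((p i ^ e i : ℕ) : ℤ) - (((π h.1) i).val : ℤ)))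
          = (((p i ^ e i : ℕ) : ℤ) - (((π h.1) i).val : ℤ)) • (Pi.single i 1 :
              ∀ i : Fin r, ZMod (p i ^ e i)) := by
        intro i _
        rw [hΦs, hσ i]
      rw [Finset.sum_congr rfl hsum]
      funext j
      rw [Pi.add_apply, Finset.sum_apply, Pi.zero_apply]
      by_cases hj : ((π h.1) j).val ≠ 0
      · rw [Finset.sum_eq_single_of_mem j (Finset.mem_filter.mpr ⟨Finset.mem_univ j, hj⟩)]
        · rw [Pi.smul_apply, Pi.single_eq_same, zsmul_one, Int.cast_sub, Int.cast_natCast,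
            Int.cast_natCast, ZMod.natCast_self, zero_sub,
            ZMod.natCast_rightInverse ((π h.1) j), add_neg_cancel]
        · intro i _ hij
          rw [Pi.smul_apply, Pi.single_eq_of_ne (Ne.symm hij), smul_zero]
      · push_neg at hj
        have hj0 : (π h.1) j = 0 := (ZMod.val_eq_zero _).mp hj
        rw [hj0, Finset.sum_eq_zero, add_zero]
        intro i hi
        have hij : j ≠ i := by
          rintro rfl
          exact (Finset.mem_filter.mp hi).2 hj
        rw [Pi.smul_apply, Pi.single_eq_of_ne hij, smul_zero]
  have hspan_le : Submodule.span ℤ (Set.range v) ≤ LinearMap.ker Φ := by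
    rw [Submodule.span_le]
    rintro x ⟨j, rfl⟩
    exact LinearMap.mem_ker.mpr (hker j)
  constructor
  · rw [Fintype.linearIndependent_iff]
    intro c hc
    have hcx : ∀ x : G, (∑ j, c j • v j) x = 0 := fun x => by
      rw [hc, Finsupp.coe_zero, Pi.zero_apply]
    have hc3 : ∀ h : {g : G // g ≠ 1 ∧ ∀ i, g ≠ σ i}, c (Sum.inr (Sum.inr h)) = 0 := by
      intro h
      have hx := hcx h.1
      rw [hval, hterm3, if_neg (fun hh => h.2.1 hh.symm), mul_zero, zero_add,
        Finset.sum_eq_zero (fun i _ => by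
          rw [if_neg (fun hh => h.2.2 i hh.symm), mul_zero]), zero_add] at hx
      exact hx
    have hc1 : c (Sum.inl ()) = 0 := by
      have hx := hcx 1
      rw [hval, if_pos rfl, mul_one,
        Finset.sum_eq_zero (fun i _ => by rw [if_neg (hσ1 i), mul_zero]), add_zero,
        Finset.sum_eq_zero (fun (h : {g : G // g ≠ 1 ∧ ∀ i, g ≠ σ i}) _ => by
          rw [hc3 h, zero_mul]), add_zero] at hx
      exact hx
    have hc2 : ∀ i, c (Sum.inr (Sum.inl i)) = 0 := by
      intro i
      have hx := hcx (σ i)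
      rw [hval, if_neg (fun hh => hσ1 i hh.symm), mul_zero, zero_add,
        Finset.sum_eq_zero (fun (h : {g : G // g ≠ 1 ∧ ∀ i, g ≠ σ i}) _ => by
          rw [hc3 h, zero_mul]), add_zero,
        Finset.sum_eq_single i] at hx
      · rw [if_pos rfl] at hx
        rcases mul_eq_zero.mp hx with h0 | h0
        · exact h0
        · exact absurd h0 (by
            exact_mod_cast (Nat.pos_of_ne_zero (fun hh =>
              Nat.Prime.ne_zero (hp i) (pow_eq_zero_iff (Nat.one_le_iff_ne_zero.mp (he i)) |>.mp hh))).ne')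
      · intro b _ hb
        rw [if_neg (fun hh => hb (hσinj hh)), mul_zero]
      · intro hmem; exact absurd (Finset.mem_univ i) hmem
    rintro (j | i | h)
    · exact hc1
    · exact hc2 i
    · exact hc3 h
  · refine le_antisymm hspan_le ?_
    intro x hx
    rw [LinearMap.mem_ker] at hx
    set c : (Unit ⊕ Fin r ⊕ {g : G // g ≠ 1 ∧ ∀ i, g ≠ σ i}) → ℤ := fun j =>
      match j with
      | Sum.inr (Sum.inr h) => x h.1
      | _ => 0 with hcdef
    set w : G →₀ ℤ := ∑ j, c j • v j with hwdef
    have hwspan : w ∈ Submodule.span ℤ (Set.range v) :=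
      Submodule.sum_mem _ fun j _ => Submodule.smul_mem _ _ (Submodule.subset_span ⟨j, rfl⟩)
    have hΦw : Φ w = 0 := by
      rw [hwdef, map_sum]
      exact Finset.sum_eq_zero fun j _ => by rw [map_smul, hker j, smul_zero]
    -- the difference x - w vanishes outside 1 and the σ i
    have hy0 : ∀ h : {g : G // g ≠ 1 ∧ ∀ i, g ≠ σ i}, (x - w) h.1 = 0 := by
      intro h
      rw [Finsupp.sub_apply, hwdef, hval, hterm3]
      show x h.1 - (c (Sum.inl ()) * _ + _ + c (Sum.inr (Sum.inr h))) = 0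
      show x h.1 - ((0 : ℤ) * _ + _ + x h.1) = 0
      rw [zero_mul, zero_add, Finset.sum_eq_zero (fun i _ => by
        show (0 : ℤ) * _ = 0
        rw [zero_mul]), zero_add, sub_self]
    have hyker : Φ (x - w) = 0 := by rw [map_sub, hx, hΦw, sub_zero]
    have hrepr : x - w = Finsupp.single (1 : G) ((x - w) 1)
        + ∑ i, Finsupp.single (σ i) ((x - w) (σ i)) := by
      ext g
      rw [Finsupp.add_apply, Finsupp.finset_sum_apply, Finsupp.single_apply]
      by_cases hg1 : g = 1
      · subst hg1
        rw [if_pos rfl, Finset.sum_eq_zero (fun i _ => by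
          rw [Finsupp.single_apply, if_neg (hσ1 i)]), add_zero]
      · rw [if_neg (fun hh => hg1 hh.symm), zero_add]
        by_cases hgs : ∃ i, g = σ i
        · obtain ⟨i, rfl⟩ := hgs
          rw [Finset.sum_eq_single i]
          · rw [Finsupp.single_apply, if_pos rfl]
          · intro b _ hb
            rw [Finsupp.single_apply, if_neg (fun hh => hb (hσinj hh))]
          · intro hmem; exact absurd (Finset.mem_univ i) hmem
        · push_neg at hgs
          rw [hy0 ⟨g, hg1, hgs⟩, Finset.sum_eq_zero (fun i _ => by
            rw [Finsupp.single_apply, if_neg (fun hh => hgs i hh.symm)])]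
    have hdvd : ∀ i : Fin r, ((p i ^ e i : ℕ) : ℤ) ∣ (x - w) (σ i) := by
      intro i
      have h0 := hyker
      rw [hrepr, map_add, hΦs, hπ1, smul_zero, zero_add, map_sum] at h0
      have h1 : ∀ i' ∈ (Finset.univ : Finset (Fin r)),
          Φ (Finsupp.single (σ i') ((x - w) (σ i')))
          = ((x - w) (σ i')) • (Pi.single i' 1 : ∀ i : Fin r, ZMod (p i ^ e i)) := by
        intro i' _
        rw [hΦs, hσ i']
      rw [Finset.sum_congr rfl h1] at h0
      have h2 := congrFun h0 i
      rw [Finset.sum_apply, Pi.zero_apply, Finset.sum_eq_single i] at h2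
      · rw [Pi.smul_apply, Pi.single_eq_same, zsmul_one] at h2
        exact (ZMod.intCast_zmod_eq_zero_iff_dvd _ _).mp h2
      · intro b _ hb
        rw [Pi.smul_apply, Pi.single_eq_of_ne (Ne.symm hb), smul_zero]
      · intro hmem; exact absurd (Finset.mem_univ i) hmem
    choose d hd using hdvd
    have hxw : ((x - w) 1) • v (Sum.inl ())
        + ∑ i, d i • v (Sum.inr (Sum.inl i)) = x - w := by
      conv_rhs => rw [hrepr]
      rw [hv1]
      congr 1
      · rw [Finsupp.smul_single, smul_eq_mul, mul_one]
      · refine Finset.sum_congr rfl fun i _ => ?_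
        rw [hv2, Finsupp.smul_single, smul_eq_mul, hd i, mul_comm]
    have hxwspan : x - w ∈ Submodule.span ℤ (Set.range v) := by
      rw [← hxw]
      exact Submodule.add_mem _
        (Submodule.smul_mem _ _ (Submodule.subset_span ⟨Sum.inl (), rfl⟩))
        (Submodule.sum_mem _ fun i _ =>
          Submodule.smul_mem _ _ (Submodule.subset_span ⟨Sum.inr (Sum.inl i), rfl⟩))
    have := Submodule.add_mem _ hxwspan hwspan
    rwa [sub_add_cancel] at this

end
end

section
/- Let H be a Hopf algebra over a field k, let W_H be the subalgebra of S(t_H)_Θ generated by the elements p_x = t_{x_1} t_{S(x_2)} and q_{x,y} = t_{x_1} t_{y_1} t_{S(x_2 y_2)} (x, y ∈ H), and let B_H be the generic base algebra. Then the Hopf ideal (W_H⁺) of S(t_H)_Θ generated by W_H⁺ = W_H ∩ ker ε coincides with the Hopf ideal (B_H⁺) generated by B_H⁺ = B_H ∩ ker ε. -/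
open TensorProduct

noncomputable section

set_option maxHeartbeats 1000000
set_option synthInstance.maxHeartbeats 200000

noncomputable section CV

namespace StmtAux

variable {k : Type*} [CommSemiring k]

section Maps

variable {M N P Q M' N' : Type*} [AddCommMonoid M] [AddCommMonoid N] [AddCommMonoid P]
  [AddCommMonoid Q] [AddCommMonoid M'] [AddCommMonoid N']
  [Module k M] [Module k N] [Module k P] [Module k Q] [Module k M'] [Module k N']

theorem mapc1 (f₂ : M →ₗ[k] N) (f₁ : P →ₗ[k] M) (g : Q →ₗ[k] M') :
    TensorProduct.map (f₂ ∘ₗ f₁) g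
      = TensorProduct.map f₂ g ∘ₗ TensorProduct.map f₁ LinearMap.id := by
  ext p q; simp

theorem mapc2 (f : M →ₗ[k] N) (g₂ : P →ₗ[k] Q) (g₁ : M' →ₗ[k] P) :
    TensorProduct.map f (g₂ ∘ₗ g₁)
      = TensorProduct.map f g₂ ∘ₗ TensorProduct.map LinearMap.id g₁ := by
  ext p q; simp

theorem rT_eq (f : M →ₗ[k] N) : f.rTensor P = TensorProduct.map f LinearMap.id := rfl

theorem lT_eq (f : M →ₗ[k] N) : f.lTensor P = TensorProduct.map LinearMap.id f := rfl

end Maps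

variable {C : Type*} [AddCommMonoid C] [Module k C]
variable {B : Type*} [Semiring B] [Algebra k B]

/-- Convolution product of two linear maps with respect to a comultiplication `dc`. -/
def cv (dc : C →ₗ[k] C ⊗[k] C) (f g : C →ₗ[k] B) : C →ₗ[k] B :=
  LinearMap.mul' k B ∘ₗ TensorProduct.map f g ∘ₗ dc

theorem cv_apply (dc : C →ₗ[k] C ⊗[k] C) (f g : C →ₗ[k] B) (x : C) :
    cv dc f g x = LinearMap.mul' k B (TensorProduct.map f g (dc x)) := rfl

theorem cv_assoc (dc : C →ₗ[k] C ⊗[k] C)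
    (hco : TensorProduct.assoc k C C C ∘ₗ TensorProduct.map dc LinearMap.id ∘ₗ dc
      = TensorProduct.map LinearMap.id dc ∘ₗ dc)
    (f g h : C →ₗ[k] B) :
    cv dc (cv dc f g) h = cv dc f (cv dc g h) := by
  have E1 : LinearMap.mul' k B ∘ₗ TensorProduct.map (LinearMap.mul' k B) h ∘ₗ
        TensorProduct.map (TensorProduct.map f g) LinearMap.id =
      (LinearMap.mul' k B ∘ₗ TensorProduct.map f (LinearMap.mul' k B ∘ₗ TensorProduct.map g h))
        ∘ₗ (TensorProduct.assoc k C C C).toLinearMap := by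
    apply TensorProduct.ext_threefold
    intro a b c
    simp [mul_assoc]
  have step1 : cv dc (cv dc f g) h = LinearMap.mul' k B ∘ₗ
      TensorProduct.map (LinearMap.mul' k B) h ∘ₗ
      TensorProduct.map (TensorProduct.map f g) LinearMap.id ∘ₗ
      TensorProduct.map dc LinearMap.id ∘ₗ dc := by
    unfold cv
    rw [mapc1, mapc1]
    simp only [LinearMap.comp_assoc]
  have step2 := congrArg (fun L => L ∘ₗ (TensorProduct.map dc LinearMap.id ∘ₗ dc)) E1
  simp only [LinearMap.comp_assoc] at step2
  have step3 := congrArg (fun L =>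
    (LinearMap.mul' k B ∘ₗ TensorProduct.map f
      (LinearMap.mul' k B ∘ₗ TensorProduct.map g h)) ∘ₗ L) hco
  simp only [LinearMap.comp_assoc] at step3
  rw [step1, step2, step3]
  unfold cv
  rw [mapc2 f (LinearMap.mul' k B) (TensorProduct.map g h ∘ₗ dc),
    mapc2 LinearMap.id (TensorProduct.map g h) dc,
    mapc2 f (LinearMap.mul' k B) (TensorProduct.map g h)]
  simp only [LinearMap.comp_assoc]

theorem cv_one_left (dc : C →ₗ[k] C ⊗[k] C) (εc : C →ₗ[k] k)
    (h1 : TensorProduct.map εc LinearMap.id ∘ₗ dc = TensorProduct.mk k k C 1)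
    (f : C →ₗ[k] B) : cv dc (Algebra.linearMap k B ∘ₗ εc) f = f := by
  unfold cv
  rw [mapc1]
  have step := congrArg (fun L =>
    (LinearMap.mul' k B ∘ₗ TensorProduct.map (Algebra.linearMap k B) f) ∘ₗ L) h1
  simp only [LinearMap.comp_assoc] at step ⊢
  rw [step]
  apply LinearMap.ext; intro c
  simp [Algebra.algebraMap_eq_smul_one]

theorem cv_one_right (dc : C →ₗ[k] C ⊗[k] C) (εc : C →ₗ[k] k)
    (h1 : TensorProduct.map LinearMap.id εc ∘ₗ dc = (TensorProduct.mk k C k).flip 1)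
    (f : C →ₗ[k] B) : cv dc f (Algebra.linearMap k B ∘ₗ εc) = f := by
  unfold cv
  rw [mapc2]
  have step := congrArg (fun L =>
    (LinearMap.mul' k B ∘ₗ TensorProduct.map f (Algebra.linearMap k B)) ∘ₗ L) h1
  simp only [LinearMap.comp_assoc] at step ⊢
  rw [step]
  apply LinearMap.ext; intro c
  simp [Algebra.algebraMap_eq_smul_one, mul_comm]

theorem cv_precomp {C' : Type*} [AddCommMonoid C'] [Module k C']
    (dc : C →ₗ[k] C ⊗[k] C) (dc' : C' →ₗ[k] C' ⊗[k] C') (φ : C' →ₗ[k] C)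
    (hφ : dc ∘ₗ φ = TensorProduct.map φ φ ∘ₗ dc') (f g : C →ₗ[k] B) :
    cv dc f g ∘ₗ φ = cv dc' (f ∘ₗ φ) (g ∘ₗ φ) := by
  unfold cv
  simp only [LinearMap.comp_assoc, hφ]
  congr 1
  rw [← LinearMap.comp_assoc, ← TensorProduct.map_comp]

theorem cv_algHom_comp {B' : Type*} [Semiring B'] [Algebra k B'] (ψ : B →ₐ[k] B')
    (dc : C →ₗ[k] C ⊗[k] C) (f g : C →ₗ[k] B) :
    ψ.toLinearMap ∘ₗ cv dc f g = cv dc (ψ.toLinearMap ∘ₗ f) (ψ.toLinearMap ∘ₗ g) := by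
  unfold cv
  have hm : ψ.toLinearMap ∘ₗ LinearMap.mul' k B
      = LinearMap.mul' k B' ∘ₗ TensorProduct.map ψ.toLinearMap ψ.toLinearMap := by
    ext a b; simp
  have step := congrArg (fun L => L ∘ₗ (TensorProduct.map f g ∘ₗ dc)) hm
  simp only [LinearMap.comp_assoc] at step ⊢
  rw [step]
  congr 1
  rw [← LinearMap.comp_assoc, ← TensorProduct.map_comp]

theorem ttc_nat {M N P Q M' N' P' Q' : Type*} [AddCommMonoid M] [AddCommMonoid N]
    [AddCommMonoid P] [AddCommMonoid Q] [AddCommMonoid M'] [AddCommMonoid N']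
    [AddCommMonoid P'] [AddCommMonoid Q']
    [Module k M] [Module k N] [Module k P] [Module k Q] [Module k M'] [Module k N']
    [Module k P'] [Module k Q']
    (f : M →ₗ[k] M') (g : N →ₗ[k] N') (h : P →ₗ[k] P') (l : Q →ₗ[k] Q') :
    (TensorProduct.tensorTensorTensorComm k M' N' P' Q').toLinearMap ∘ₗ
      TensorProduct.map (TensorProduct.map f g) (TensorProduct.map h l) =
    TensorProduct.map (TensorProduct.map f h) (TensorProduct.map g l) ∘ₗ
      (TensorProduct.tensorTensorTensorComm k M N P Q).toLinearMap := by
  apply TensorProduct.ext_fourfold'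
  intro a b c d
  simp

section HopfConv

variable {H : Type*} [Ring H] [HopfAlgebra k H]

/-- The comultiplication on `H ⊗ H`. -/
def dC : (H ⊗[k] H) →ₗ[k] (H ⊗[k] H) ⊗[k] (H ⊗[k] H) :=
  (TensorProduct.tensorTensorTensorComm k H H H H).toLinearMap ∘ₗ
    TensorProduct.map (Coalgebra.comul (R := k)) (Coalgebra.comul (R := k))

/-- The counit on `H ⊗ H`. -/
def εC : (H ⊗[k] H) →ₗ[k] k :=
  Coalgebra.counit (R := k) ∘ₗ LinearMap.mul' k H

theorem dC_tmul (x y : H) :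
    dC (x ⊗ₜ[k] y) = (TensorProduct.tensorTensorTensorComm k H H H H)
      ((Coalgebra.comul (R := k) x) ⊗ₜ[k] (Coalgebra.comul (R := k) y)) := rfl

theorem mulTT : LinearMap.mul' k (H ⊗[k] H) =
    TensorProduct.map (LinearMap.mul' k H) (LinearMap.mul' k H) ∘ₗ
      (TensorProduct.tensorTensorTensorComm k H H H H).toLinearMap := by
  apply TensorProduct.ext_fourfold'
  intro a b c d
  simp [LinearMap.mul'_apply, Algebra.TensorProduct.tmul_mul_tmul]

theorem m_cohom : (Coalgebra.comul (R := k)) ∘ₗ LinearMap.mul' k H =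
    TensorProduct.map (LinearMap.mul' k H) (LinearMap.mul' k H) ∘ₗ dC := by
  apply TensorProduct.ext'
  intro x y
  have h := LinearMap.congr_fun (mulTT (k := k) (H := H))
    ((Coalgebra.comul (R := k) x) ⊗ₜ[k] (Coalgebra.comul (R := k) y))
  simp only [LinearMap.comp_apply, LinearMap.mul'_apply, LinearEquiv.coe_coe] at h ⊢
  rw [Bialgebra.comul_mul, dC_tmul, ← h]

theorem coassoc_dC : TensorProduct.assoc k (H ⊗[k] H) (H ⊗[k] H) (H ⊗[k] H) ∘ₗ
      TensorProduct.map (dC (k := k) (H := H)) LinearMap.id ∘ₗ dC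
      = TensorProduct.map LinearMap.id dC ∘ₗ dC := by
  have hL : TensorProduct.map (dC (k := k) (H := H)) LinearMap.id ∘ₗ dC =
      TensorProduct.map (TensorProduct.tensorTensorTensorComm k H H H H).toLinearMap
        LinearMap.id ∘ₗ
      (TensorProduct.tensorTensorTensorComm k (H ⊗[k] H) H (H ⊗[k] H) H).toLinearMap ∘ₗ
      TensorProduct.map
        (TensorProduct.map (Coalgebra.comul (R := k)) LinearMap.id ∘ₗ Coalgebra.comul)
        (TensorProduct.map (Coalgebra.comul (R := k)) LinearMap.id ∘ₗ Coalgebra.comul) := by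
    unfold dC
    rw [mapc1]
    have nat := ttc_nat (k := k) (Coalgebra.comul (R := k) (A := H)) (LinearMap.id (M := H))
      (Coalgebra.comul (R := k) (A := H)) (LinearMap.id (M := H))
    have key : TensorProduct.map (TensorProduct.map (Coalgebra.comul (R := k) (A := H))
          (Coalgebra.comul (R := k) (A := H))) LinearMap.id ∘ₗ
          (TensorProduct.tensorTensorTensorComm k H H H H).toLinearMap =
        (TensorProduct.tensorTensorTensorComm k (H ⊗[k] H) H (H ⊗[k] H) H).toLinearMap ∘ₗ
          TensorProduct.map
            (TensorProduct.map (Coalgebra.comul (R := k) (A := H)) LinearMap.id)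
            (TensorProduct.map (Coalgebra.comul (R := k) (A := H)) LinearMap.id) := by
      have e0 : (LinearMap.id : (H ⊗[k] H) →ₗ[k] (H ⊗[k] H))
          = TensorProduct.map LinearMap.id LinearMap.id := (TensorProduct.map_id).symm
      rw [e0]
      exact nat.symm
    have step := congrArg (fun L => L ∘ₗ TensorProduct.map
        (Coalgebra.comul (R := k) (A := H)) (Coalgebra.comul (R := k) (A := H))) key
    simp only [LinearMap.comp_assoc] at step ⊢
    rw [step, TensorProduct.map_comp]
  have hR : TensorProduct.map LinearMap.id (dC (k := k) (H := H)) ∘ₗ dC =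
      TensorProduct.map LinearMap.id
        (TensorProduct.tensorTensorTensorComm k H H H H).toLinearMap ∘ₗ
      (TensorProduct.tensorTensorTensorComm k H (H ⊗[k] H) H (H ⊗[k] H)).toLinearMap ∘ₗ
      TensorProduct.map
        (TensorProduct.map LinearMap.id (Coalgebra.comul (R := k)) ∘ₗ Coalgebra.comul)
        (TensorProduct.map LinearMap.id (Coalgebra.comul (R := k)) ∘ₗ Coalgebra.comul) := by
    unfold dC
    rw [mapc2]
    have nat := ttc_nat (k := k) (LinearMap.id (M := H)) (Coalgebra.comul (R := k) (A := H))
      (LinearMap.id (M := H)) (Coalgebra.comul (R := k) (A := H))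
    have key : TensorProduct.map LinearMap.id
          (TensorProduct.map (Coalgebra.comul (R := k) (A := H))
            (Coalgebra.comul (R := k) (A := H))) ∘ₗ
          (TensorProduct.tensorTensorTensorComm k H H H H).toLinearMap =
        (TensorProduct.tensorTensorTensorComm k H (H ⊗[k] H) H (H ⊗[k] H)).toLinearMap ∘ₗ
          TensorProduct.map
            (TensorProduct.map LinearMap.id (Coalgebra.comul (R := k) (A := H)))
            (TensorProduct.map LinearMap.id (Coalgebra.comul (R := k) (A := H))) := by
      have e0 : (LinearMap.id : (H ⊗[k] H) →ₗ[k] (H ⊗[k] H))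
          = TensorProduct.map LinearMap.id LinearMap.id := (TensorProduct.map_id).symm
      rw [e0]
      exact nat.symm
    have step := congrArg (fun L => L ∘ₗ TensorProduct.map
        (Coalgebra.comul (R := k) (A := H)) (Coalgebra.comul (R := k) (A := H))) key
    simp only [LinearMap.comp_assoc] at step ⊢
    rw [step, TensorProduct.map_comp]
  have E5 : (TensorProduct.assoc k (H ⊗[k] H) (H ⊗[k] H) (H ⊗[k] H)).toLinearMap ∘ₗ
      TensorProduct.map (TensorProduct.tensorTensorTensorComm k H H H H).toLinearMap
        LinearMap.id ∘ₗ
      (TensorProduct.tensorTensorTensorComm k (H ⊗[k] H) H (H ⊗[k] H) H).toLinearMap =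
      TensorProduct.map LinearMap.id
        (TensorProduct.tensorTensorTensorComm k H H H H).toLinearMap ∘ₗ
      (TensorProduct.tensorTensorTensorComm k H (H ⊗[k] H) H (H ⊗[k] H)).toLinearMap ∘ₗ
      TensorProduct.map (TensorProduct.assoc k H H H).toLinearMap
        (TensorProduct.assoc k H H H).toLinearMap := by
    apply TensorProduct.ext_fourfold'
    intro m n p q
    induction m using TensorProduct.induction_on with
    | zero => simp only [zero_tmul, map_zero]
    | tmul a b =>
      induction p using TensorProduct.induction_on with
      | zero => simp only [zero_tmul, tmul_zero, map_zero]
      | tmul c d =>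
        simp only [LinearMap.comp_apply, LinearEquiv.coe_coe, TensorProduct.map_tmul,
          tensorTensorTensorComm_tmul, assoc_tmul, LinearMap.id_coe, id_eq]
      | add u v hu hv => simp only [add_tmul, tmul_add, map_add, hu, hv]
    | add u v hu hv => simp only [add_tmul, tmul_add, map_add, hu, hv]
  have co : (TensorProduct.assoc k H H H).toLinearMap ∘ₗ
        TensorProduct.map (Coalgebra.comul (R := k) (A := H)) LinearMap.id ∘ₗ
        Coalgebra.comul
      = TensorProduct.map LinearMap.id (Coalgebra.comul (R := k) (A := H)) ∘ₗ
        Coalgebra.comul := by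
    have := Coalgebra.coassoc (R := k) (A := H)
    rw [rT_eq, lT_eq] at this
    exact this
  calc (TensorProduct.assoc k (H ⊗[k] H) (H ⊗[k] H) (H ⊗[k] H)).toLinearMap ∘ₗ
        TensorProduct.map (dC (k := k) (H := H)) LinearMap.id ∘ₗ dC
      = ((TensorProduct.assoc k (H ⊗[k] H) (H ⊗[k] H) (H ⊗[k] H)).toLinearMap ∘ₗ
          TensorProduct.map (TensorProduct.tensorTensorTensorComm k H H H H).toLinearMap
            LinearMap.id ∘ₗ
          (TensorProduct.tensorTensorTensorComm k (H ⊗[k] H) H (H ⊗[k] H) H).toLinearMap) ∘ₗ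
          TensorProduct.map
            (TensorProduct.map (Coalgebra.comul (R := k)) LinearMap.id ∘ₗ Coalgebra.comul)
            (TensorProduct.map (Coalgebra.comul (R := k)) LinearMap.id ∘ₗ Coalgebra.comul) := by
        rw [hL]; simp only [LinearMap.comp_assoc]
    _ = (TensorProduct.map LinearMap.id
          (TensorProduct.tensorTensorTensorComm k H H H H).toLinearMap ∘ₗ
        (TensorProduct.tensorTensorTensorComm k H (H ⊗[k] H) H (H ⊗[k] H)).toLinearMap) ∘ₗ
        TensorProduct.map
          ((TensorProduct.assoc k H H H).toLinearMap ∘ₗ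
            TensorProduct.map (Coalgebra.comul (R := k)) LinearMap.id ∘ₗ Coalgebra.comul)
          ((TensorProduct.assoc k H H H).toLinearMap ∘ₗ
            TensorProduct.map (Coalgebra.comul (R := k)) LinearMap.id ∘ₗ Coalgebra.comul) := by
        rw [E5, TensorProduct.map_comp, TensorProduct.map_comp]
        simp only [LinearMap.comp_assoc]
        conv_rhs => rw [TensorProduct.map_comp]
    _ = TensorProduct.map LinearMap.id dC ∘ₗ dC := by
        rw [co, hR]
        simp only [LinearMap.comp_assoc]

theorem hrTH : TensorProduct.map (Coalgebra.counit (R := k) (A := H)) LinearMap.id ∘ₗ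
    Coalgebra.comul = TensorProduct.mk k k H 1 := by
  have := Coalgebra.rTensor_counit_comp_comul (R := k) (A := H)
  rwa [rT_eq] at this

theorem hlTH : TensorProduct.map LinearMap.id (Coalgebra.counit (R := k) (A := H)) ∘ₗ
    Coalgebra.comul = (TensorProduct.mk k H k).flip 1 := by
  have := Coalgebra.lTensor_counit_comp_comul (R := k) (A := H)
  rwa [lT_eq] at this

theorem hrTC : TensorProduct.map (εC (k := k) (H := H)) LinearMap.id ∘ₗ dC
    = TensorProduct.mk k k (H ⊗[k] H) 1 := by
  have E6 : TensorProduct.map (εC (k := k) (H := H)) LinearMap.id ∘ₗ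
      (TensorProduct.tensorTensorTensorComm k H H H H).toLinearMap =
      TensorProduct.map (LinearMap.mul' k k) LinearMap.id ∘ₗ
      (TensorProduct.tensorTensorTensorComm k k H k H).toLinearMap ∘ₗ
      TensorProduct.map
        (TensorProduct.map (Coalgebra.counit (R := k)) LinearMap.id)
        (TensorProduct.map (Coalgebra.counit (R := k)) LinearMap.id) := by
    apply TensorProduct.ext_fourfold'
    intro a b c d
    simp [εC, LinearMap.mul'_apply, Bialgebra.counit_mul]
  have E6b : TensorProduct.map (LinearMap.mul' k k) LinearMap.id ∘ₗ
      (TensorProduct.tensorTensorTensorComm k k H k H).toLinearMap ∘ₗ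
      TensorProduct.map ((TensorProduct.mk k k H) 1) ((TensorProduct.mk k k H) 1)
      = TensorProduct.mk k k (H ⊗[k] H) 1 := by
    apply TensorProduct.ext'
    intro x y
    simp [LinearMap.mul'_apply]
  unfold dC
  have step := congrArg (fun L => L ∘ₗ TensorProduct.map
      (Coalgebra.comul (R := k) (A := H)) (Coalgebra.comul (R := k) (A := H))) E6
  simp only [LinearMap.comp_assoc] at step ⊢
  rw [step, ← TensorProduct.map_comp, hrTH, E6b]

theorem hlTC : TensorProduct.map LinearMap.id (εC (k := k) (H := H)) ∘ₗ dC
    = (TensorProduct.mk k (H ⊗[k] H) k).flip 1 := by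
  have E7 : TensorProduct.map LinearMap.id (εC (k := k) (H := H)) ∘ₗ
      (TensorProduct.tensorTensorTensorComm k H H H H).toLinearMap =
      TensorProduct.map LinearMap.id (LinearMap.mul' k k) ∘ₗ
      (TensorProduct.tensorTensorTensorComm k H k H k).toLinearMap ∘ₗ
      TensorProduct.map
        (TensorProduct.map LinearMap.id (Coalgebra.counit (R := k)))
        (TensorProduct.map LinearMap.id (Coalgebra.counit (R := k))) := by
    apply TensorProduct.ext_fourfold'
    intro a b c d
    simp [εC, LinearMap.mul'_apply, Bialgebra.counit_mul]
  have E7b : TensorProduct.map LinearMap.id (LinearMap.mul' k k) ∘ₗ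
      (TensorProduct.tensorTensorTensorComm k H k H k).toLinearMap ∘ₗ
      TensorProduct.map ((TensorProduct.mk k H k).flip 1) ((TensorProduct.mk k H k).flip 1)
      = (TensorProduct.mk k (H ⊗[k] H) k).flip 1 := by
    apply TensorProduct.ext'
    intro x y
    simp [LinearMap.mul'_apply]
  unfold dC
  have step := congrArg (fun L => L ∘ₗ TensorProduct.map
      (Coalgebra.comul (R := k) (A := H)) (Coalgebra.comul (R := k) (A := H))) E7
  simp only [LinearMap.comp_assoc] at step ⊢
  rw [step, ← TensorProduct.map_comp, hlTH, E7b]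

theorem algk_id : Algebra.linearMap k k = LinearMap.id := by
  ext x; simp

theorem cvk_right (f : H →ₗ[k] k) :
    cv (Coalgebra.comul (R := k)) f (Coalgebra.counit (R := k)) = f := by
  have := cv_one_right (B := k) (Coalgebra.comul (R := k) (A := H))
    (Coalgebra.counit (R := k)) hlTH f
  rwa [algk_id, LinearMap.id_comp] at this

theorem cvk_left (f : H →ₗ[k] k) :
    cv (Coalgebra.comul (R := k)) (Coalgebra.counit (R := k)) f = f := by
  have := cv_one_left (B := k) (Coalgebra.comul (R := k) (A := H))
    (Coalgebra.counit (R := k)) hrTH f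
  rwa [algk_id, LinearMap.id_comp] at this

theorem cvk_rightC (f : (H ⊗[k] H) →ₗ[k] k) :
    cv (dC (k := k) (H := H)) f εC = f := by
  have := cv_one_right (B := k) (dC (k := k) (H := H)) εC hlTC f
  rwa [algk_id, LinearMap.id_comp] at this

theorem εmul {B : Type*} [Semiring B] [Bialgebra k B] :
    (Coalgebra.counit (R := k) (A := B)) ∘ₗ LinearMap.mul' k B
      = LinearMap.mul' k k ∘ₗ TensorProduct.map (Coalgebra.counit (R := k))
          (Coalgebra.counit (R := k)) := by
  apply TensorProduct.ext'
  intro x y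
  simp [LinearMap.mul'_apply]

theorem counit_antipode : (Coalgebra.counit (R := k)) ∘ₗ
    (HopfAlgebra.antipode (R := k) (A := H)) = Coalgebra.counit (R := k) := by
  have h1 : cv (Coalgebra.comul (R := k))
      ((Coalgebra.counit (R := k)) ∘ₗ (HopfAlgebra.antipode (R := k) (A := H)))
      (Coalgebra.counit (R := k))
      = (Coalgebra.counit (R := k)) ∘ₗ (LinearMap.mul' k H ∘ₗ
          TensorProduct.map (HopfAlgebra.antipode (R := k)) LinearMap.id ∘ₗ
          Coalgebra.comul) := by
    unfold cv
    have e1 : TensorProduct.map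
        ((Coalgebra.counit (R := k)) ∘ₗ (HopfAlgebra.antipode (R := k) (A := H)))
        (Coalgebra.counit (R := k))
        = TensorProduct.map (Coalgebra.counit (R := k) (A := H)) (Coalgebra.counit (R := k) (A := H)) ∘ₗ
          TensorProduct.map (HopfAlgebra.antipode (R := k) (A := H)) LinearMap.id := by
      rw [← TensorProduct.map_comp, LinearMap.comp_id]
    rw [e1]
    have step := congrArg (fun L => L ∘ₗ (TensorProduct.map
        (HopfAlgebra.antipode (R := k) (A := H)) LinearMap.id ∘ₗ Coalgebra.comul)) (εmul (k := k) (B := H))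
    simp only [LinearMap.comp_assoc] at step ⊢
    rw [← step]
  have h2 : LinearMap.mul' k H ∘ₗ
      TensorProduct.map (HopfAlgebra.antipode (R := k) (A := H)) LinearMap.id ∘ₗ
      Coalgebra.comul = Algebra.linearMap k H ∘ₗ Coalgebra.counit := by
    have := HopfAlgebra.mul_antipode_rTensor_comul (R := k) (A := H)
    rwa [rT_eq] at this
  have h3 : (Coalgebra.counit (R := k) (A := H)) ∘ₗ Algebra.linearMap k H = LinearMap.id := by
    ext r; simp
  rw [cvk_right] at h1
  rw [h1, h2, ← LinearMap.comp_assoc, h3, LinearMap.id_comp]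

theorem cv_mul_mul {B : Type*} [CommSemiring B] [Algebra k B] (f g f' g' : H →ₗ[k] B) :
    cv (dC (k := k) (H := H)) (LinearMap.mul' k B ∘ₗ TensorProduct.map f g)
      (LinearMap.mul' k B ∘ₗ TensorProduct.map f' g')
    = LinearMap.mul' k B ∘ₗ TensorProduct.map (cv (Coalgebra.comul (R := k)) f f')
        (cv (Coalgebra.comul (R := k)) g g') := by
  have E3 : LinearMap.mul' k B ∘ₗ TensorProduct.map
        (LinearMap.mul' k B ∘ₗ TensorProduct.map f g)
        (LinearMap.mul' k B ∘ₗ TensorProduct.map f' g') ∘ₗ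
      (TensorProduct.tensorTensorTensorComm k H H H H).toLinearMap
      = LinearMap.mul' k B ∘ₗ TensorProduct.map
        (LinearMap.mul' k B ∘ₗ TensorProduct.map f f')
        (LinearMap.mul' k B ∘ₗ TensorProduct.map g g') := by
    apply TensorProduct.ext_fourfold'
    intro a b c d
    simp only [LinearMap.comp_apply, LinearEquiv.coe_coe, tensorTensorTensorComm_tmul,
      TensorProduct.map_tmul, LinearMap.mul'_apply]
    exact mul_mul_mul_comm (f a) (g c) (f' b) (g' d)
  unfold cv dC
  have step := congrArg (fun L => L ∘ₗ TensorProduct.map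
      (Coalgebra.comul (R := k) (A := H)) (Coalgebra.comul (R := k) (A := H))) E3
  simp only [LinearMap.comp_assoc] at step ⊢
  rw [step, ← TensorProduct.map_comp]
  simp only [LinearMap.comp_assoc]

end HopfConv

end StmtAux

end CV


variable {k : Type*} [Field k]

namespace StmtAux

section Main

variable {H : Type*} [Ring H] [HopfAlgebra k H]
  {A : Type*} [CommRing A] [HopfAlgebra k A]

/-- t ∘ S -/
def tSF (F : FreeCommHopfData k H A) : H →ₗ[k] A :=
  F.t ∘ₗ HopfAlgebra.antipode (R := k)

def ttF (F : FreeCommHopfData k H A) : (H ⊗[k] H) →ₗ[k] A :=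
  LinearMap.mul' k A ∘ₗ TensorProduct.map F.t F.t

def TSF (F : FreeCommHopfData k H A) : (H ⊗[k] H) →ₗ[k] A :=
  tSF F ∘ₗ LinearMap.mul' k H

def TinvF (F : FreeCommHopfData k H A) : (H ⊗[k] H) →ₗ[k] A :=
  F.tinv ∘ₗ LinearMap.mul' k H

def TF (F : FreeCommHopfData k H A) : (H ⊗[k] H) →ₗ[k] A :=
  F.t ∘ₗ LinearMap.mul' k H

def ssF (F : FreeCommHopfData k H A) : (H ⊗[k] H) →ₗ[k] A :=
  LinearMap.mul' k A ∘ₗ TensorProduct.map F.tinv F.tinv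

def σL (F : FreeCommHopfData k H A) : (H ⊗[k] H) →ₗ[k] A :=
  cv dC (ttF F) (TinvF F)

def σ'L (F : FreeCommHopfData k H A) : (H ⊗[k] H) →ₗ[k] A :=
  cv dC (TF F) (ssF F)

variable (F : FreeCommHopfData k H A)

theorem pMap_eq : pMap F = cv (Coalgebra.comul (R := k)) F.t (tSF F) := rfl

theorem qMap_eq : qMap F = cv dC (ttF F) (TSF F) := by
  unfold qMap cv dC ttF TSF tSF
  have e : TensorProduct.map (LinearMap.mul' k A ∘ₗ TensorProduct.map F.t F.t)
        ((F.t ∘ₗ HopfAlgebra.antipode (R := k)) ∘ₗ LinearMap.mul' k H)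
      = TensorProduct.map (LinearMap.mul' k A) LinearMap.id ∘ₗ
        TensorProduct.map (TensorProduct.map F.t F.t)
          (F.t ∘ₗ HopfAlgebra.antipode (R := k) ∘ₗ LinearMap.mul' k H) := by
    rw [← TensorProduct.map_comp, LinearMap.id_comp]
    simp only [LinearMap.comp_assoc]
  rw [e]
  simp only [LinearMap.comp_assoc]

theorem sigmaElem_eq (x y : H) : sigmaElem F x y = σL F (x ⊗ₜ[k] y) := by
  unfold sigmaElem σL cv dC ttF TinvF
  have e : TensorProduct.map (LinearMap.mul' k A ∘ₗ TensorProduct.map F.t F.t)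
        (F.tinv ∘ₗ LinearMap.mul' k H)
      = TensorProduct.map (LinearMap.mul' k A) LinearMap.id ∘ₗ
        TensorProduct.map (TensorProduct.map F.t F.t)
          (F.tinv ∘ₗ LinearMap.mul' k H) := by
    rw [← TensorProduct.map_comp, LinearMap.id_comp]
  rw [e]
  simp only [LinearMap.comp_apply, TensorProduct.map_tmul]

theorem sigmaInvElem_eq (x y : H) : sigmaInvElem F x y = σ'L F (x ⊗ₜ[k] y) := by
  unfold sigmaInvElem σ'L cv dC TF ssF
  have e : TensorProduct.map (F.t ∘ₗ LinearMap.mul' k H)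
        (LinearMap.mul' k A ∘ₗ TensorProduct.map F.tinv F.tinv)
      = TensorProduct.map LinearMap.id (LinearMap.mul' k A) ∘ₗ
        TensorProduct.map (F.t ∘ₗ LinearMap.mul' k H)
          (TensorProduct.map F.tinv F.tinv) := by
    rw [← TensorProduct.map_comp, LinearMap.id_comp]
  rw [e]
  simp only [LinearMap.comp_apply, TensorProduct.map_tmul]

theorem F_t_tinv : cv (Coalgebra.comul (R := k)) F.t F.tinv
    = Algebra.linearMap k A ∘ₗ Coalgebra.counit (R := k) := by
  apply LinearMap.ext; intro x
  have := F.mul_t_tinv x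
  simp only [cv_apply, LinearMap.comp_apply]
  rw [this, Algebra.linearMap_apply, Algebra.algebraMap_eq_smul_one]

theorem F_tinv_t : cv (Coalgebra.comul (R := k)) F.tinv F.t
    = Algebra.linearMap k A ∘ₗ Coalgebra.counit (R := k) := by
  apply LinearMap.ext; intro x
  have := F.mul_tinv_t x
  simp only [cv_apply, LinearMap.comp_apply]
  rw [this, Algebra.linearMap_apply, Algebra.algebraMap_eq_smul_one]

theorem counit_comp_t : Coalgebra.counit (R := k) ∘ₗ F.t = Coalgebra.counit (R := k) := by
  apply LinearMap.ext; intro x; exact F.counit_t x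

theorem counit_comp_tinv : Coalgebra.counit (R := k) ∘ₗ F.tinv = Coalgebra.counit (R := k) := by
  apply LinearMap.ext; intro x; exact F.counit_tinv x

theorem counitA_lin : (Bialgebra.counitAlgHom k A).toLinearMap = Coalgebra.counit (R := k) := rfl

theorem counit_comp_tS : Coalgebra.counit (R := k) ∘ₗ tSF F = Coalgebra.counit (R := k) := by
  unfold tSF
  rw [← LinearMap.comp_assoc, counit_comp_t, counit_antipode]

theorem counit_comp_tt : Coalgebra.counit (R := k) ∘ₗ ttF F = εC := by
  unfold ttF εC
  have step := congrArg (fun L => L ∘ₗ TensorProduct.map F.t F.t) (εmul (k := k) (B := A))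
  simp only [LinearMap.comp_assoc] at step ⊢
  rw [step, ← TensorProduct.map_comp, counit_comp_t, ← εmul (k := k) (B := H)]

theorem counit_comp_ss : Coalgebra.counit (R := k) ∘ₗ ssF F = εC := by
  unfold ssF εC
  have step := congrArg (fun L => L ∘ₗ TensorProduct.map F.tinv F.tinv) (εmul (k := k) (B := A))
  simp only [LinearMap.comp_assoc] at step ⊢
  rw [step, ← TensorProduct.map_comp, counit_comp_tinv, ← εmul (k := k) (B := H)]

theorem counit_comp_TS : Coalgebra.counit (R := k) ∘ₗ TSF F = εC := by
  unfold TSF εC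
  rw [← LinearMap.comp_assoc, counit_comp_tS]

theorem counit_comp_Tinv : Coalgebra.counit (R := k) ∘ₗ TinvF F = εC := by
  unfold TinvF εC
  rw [← LinearMap.comp_assoc, counit_comp_tinv]

theorem counit_comp_T : Coalgebra.counit (R := k) ∘ₗ TF F = εC := by
  unfold TF εC
  rw [← LinearMap.comp_assoc, counit_comp_t]

theorem counit_comp_p : Coalgebra.counit (R := k) ∘ₗ pMap F = Coalgebra.counit (R := k) := by
  rw [pMap_eq]
  have h := cv_algHom_comp (Bialgebra.counitAlgHom k A) (Coalgebra.comul (R := k)) F.t (tSF F)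
  rw [counitA_lin] at h
  rw [h, counit_comp_t, counit_comp_tS, cvk_right]

theorem counit_comp_q : Coalgebra.counit (R := k) ∘ₗ qMap F = εC := by
  rw [qMap_eq]
  have h := cv_algHom_comp (Bialgebra.counitAlgHom k A) dC (ttF F) (TSF F)
  rw [counitA_lin] at h
  rw [h, counit_comp_tt F, counit_comp_TS F, cvk_rightC]

theorem counit_comp_σ : Coalgebra.counit (R := k) ∘ₗ σL F = εC := by
  unfold σL
  have h := cv_algHom_comp (Bialgebra.counitAlgHom k A) dC (ttF F) (TinvF F)
  rw [counitA_lin] at h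
  rw [h, counit_comp_tt F, counit_comp_Tinv F, cvk_rightC]

theorem counit_comp_σ' : Coalgebra.counit (R := k) ∘ₗ σ'L F = εC := by
  unfold σ'L
  have h := cv_algHom_comp (Bialgebra.counitAlgHom k A) dC (TF F) (ssF F)
  rw [counitA_lin] at h
  rw [h, counit_comp_T F, counit_comp_ss F, cvk_rightC]

theorem hcoH : TensorProduct.assoc k H H H ∘ₗ
    TensorProduct.map (Coalgebra.comul (R := k) (A := H)) LinearMap.id ∘ₗ Coalgebra.comul
    = TensorProduct.map LinearMap.id (Coalgebra.comul (R := k) (A := H)) ∘ₗ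
      Coalgebra.comul := by
  have := Coalgebra.coassoc (R := k) (A := H)
  rwa [rT_eq, lT_eq] at this

theorem antipode_ax : LinearMap.mul' k H ∘ₗ
    TensorProduct.map (HopfAlgebra.antipode (R := k) (A := H)) LinearMap.id ∘ₗ
    Coalgebra.comul = Algebra.linearMap k H ∘ₗ Coalgebra.counit := by
  have := HopfAlgebra.mul_antipode_rTensor_comul (R := k) (A := H)
  rwa [rT_eq] at this

theorem one_one {B : Type*} [Semiring B] [Algebra k B] :
    LinearMap.mul' k B ∘ₗ TensorProduct.map
      (Algebra.linearMap k B ∘ₗ Coalgebra.counit (R := k) (A := H))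
      (Algebra.linearMap k B ∘ₗ Coalgebra.counit (R := k) (A := H))
    = Algebra.linearMap k B ∘ₗ εC := by
  apply TensorProduct.ext'
  intro x y
  simp only [LinearMap.comp_apply, TensorProduct.map_tmul, LinearMap.mul'_apply,
    Algebra.linearMap_apply, εC]
  rw [← map_mul, ← Bialgebra.counit_mul]

theorem alg_push {B' : Type*} [Semiring B'] [Algebra k B'] (ψ : A →ₐ[k] B') :
    ψ.toLinearMap ∘ₗ Algebra.linearMap k A = Algebra.linearMap k B' := by
  apply LinearMap.ext; intro r
  simp

theorem algHom_comp_mul'' {B B' : Type*} [Semiring B] [Algebra k B] [Semiring B']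
    [Algebra k B'] (ψ : B →ₐ[k] B') :
    ψ.toLinearMap ∘ₗ LinearMap.mul' k B
      = LinearMap.mul' k B' ∘ₗ TensorProduct.map ψ.toLinearMap ψ.toLinearMap := by
  ext a b; simp

theorem pi_comp_eq_iff {X : Type*} [AddCommGroup X] [Module k X] (I : Ideal A)
    (f g : X →ₗ[k] A) :
    (Ideal.Quotient.mkₐ k I).toLinearMap ∘ₗ f = (Ideal.Quotient.mkₐ k I).toLinearMap ∘ₗ g
      ↔ ∀ x, f x - g x ∈ I := by
  constructor
  · intro h x
    have := LinearMap.congr_fun h x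
    simp only [LinearMap.comp_apply, AlgHom.toLinearMap_apply, Ideal.Quotient.mkₐ_eq_mk] at this
    exact (Ideal.Quotient.eq).mp this
  · intro h
    apply LinearMap.ext; intro x
    simp only [LinearMap.comp_apply, AlgHom.toLinearMap_apply, Ideal.Quotient.mkₐ_eq_mk]
    exact (Ideal.Quotient.eq).mpr (h x)

theorem forall_mem_of_tmul (I : Ideal A) (L : (H ⊗[k] H) →ₗ[k] A)
    (h : ∀ x y, L (x ⊗ₜ[k] y) ∈ I) : ∀ z, L z ∈ I := by
  intro z
  have h2 : Submodule.span k {t : H ⊗[k] H | ∃ m n, m ⊗ₜ[k] n = t} ≤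
      Submodule.comap L (Submodule.restrictScalars k I) := by
    rw [Submodule.span_le]
    rintro _ ⟨m, n, rfl⟩
    exact h m n
  exact h2 (by rw [TensorProduct.span_tmul_eq_top]; exact Submodule.mem_top)

section Chains

variable (I : Ideal A)

theorem h1_lemma : cv (Coalgebra.comul (R := k))
    ((Ideal.Quotient.mkₐ k I).toLinearMap ∘ₗ F.t)
    ((Ideal.Quotient.mkₐ k I).toLinearMap ∘ₗ F.tinv)
    = Algebra.linearMap k (A ⧸ I) ∘ₗ Coalgebra.counit (R := k) := by
  rw [← cv_algHom_comp, F_t_tinv, ← LinearMap.comp_assoc, alg_push]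

theorem h2_lemma : cv (Coalgebra.comul (R := k))
    ((Ideal.Quotient.mkₐ k I).toLinearMap ∘ₗ F.tinv)
    ((Ideal.Quotient.mkₐ k I).toLinearMap ∘ₗ F.t)
    = Algebra.linearMap k (A ⧸ I) ∘ₗ Coalgebra.counit (R := k) := by
  rw [← cv_algHom_comp, F_tinv_t, ← LinearMap.comp_assoc, alg_push]

theorem htt_lemma : (Ideal.Quotient.mkₐ k I).toLinearMap ∘ₗ ttF F
    = LinearMap.mul' k (A ⧸ I) ∘ₗ TensorProduct.map
        ((Ideal.Quotient.mkₐ k I).toLinearMap ∘ₗ F.t)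
        ((Ideal.Quotient.mkₐ k I).toLinearMap ∘ₗ F.t) := by
  unfold ttF
  rw [← LinearMap.comp_assoc, algHom_comp_mul'' (Ideal.Quotient.mkₐ k I)]
  simp only [LinearMap.comp_assoc]
  rw [← TensorProduct.map_comp]

theorem c1_lemma : cv dC
    (((Ideal.Quotient.mkₐ k I).toLinearMap ∘ₗ F.tinv) ∘ₗ LinearMap.mul' k H)
    (((Ideal.Quotient.mkₐ k I).toLinearMap ∘ₗ F.t) ∘ₗ LinearMap.mul' k H)
    = Algebra.linearMap k (A ⧸ I) ∘ₗ εC := by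
  rw [← cv_precomp (Coalgebra.comul (R := k)) dC (LinearMap.mul' k H) m_cohom,
    h2_lemma F I]
  simp only [LinearMap.comp_assoc]
  rfl

/-- In the quotient by any ideal containing all `σ(x,y) - ε(x)ε(y)`, one has
`t ∘ S ≡ tinv`. -/
theorem tS_eq_tinv_of_sigma
    (hσ : (Ideal.Quotient.mkₐ k I).toLinearMap ∘ₗ σL F
      = (Ideal.Quotient.mkₐ k I).toLinearMap ∘ₗ (Algebra.linearMap k A ∘ₗ εC)) :
    (Ideal.Quotient.mkₐ k I).toLinearMap ∘ₗ tSF F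
      = (Ideal.Quotient.mkₐ k I).toLinearMap ∘ₗ F.tinv := by
  set πl := (Ideal.Quotient.mkₐ k I).toLinearMap with hπl
  set t' := πl ∘ₗ F.t with ht'
  set tinv' := πl ∘ₗ F.tinv with htinv'
  have hσQ : cv dC (LinearMap.mul' k (A ⧸ I) ∘ₗ TensorProduct.map t' t')
      (tinv' ∘ₗ LinearMap.mul' k H) = Algebra.linearMap k (A ⧸ I) ∘ₗ εC := by
    have e0 : πl ∘ₗ σL F = cv dC (πl ∘ₗ ttF F) (πl ∘ₗ TinvF F) := by
      unfold σL
      rw [cv_algHom_comp]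
    have e1 : πl ∘ₗ TinvF F = tinv' ∘ₗ LinearMap.mul' k H := by
      unfold TinvF
      rw [← LinearMap.comp_assoc]
    rw [← htt_lemma F I, ← e1, ← e0, hσ, ← LinearMap.comp_assoc, alg_push]
  -- Q4 : multiplicativity of t' in the quotient
  have hQ4 : LinearMap.mul' k (A ⧸ I) ∘ₗ TensorProduct.map t' t'
      = t' ∘ₗ LinearMap.mul' k H := by
    have e1 := cv_assoc dC coassoc_dC
      (LinearMap.mul' k (A ⧸ I) ∘ₗ TensorProduct.map t' t')
      (tinv' ∘ₗ LinearMap.mul' k H) (t' ∘ₗ LinearMap.mul' k H)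
    have lhs1 : cv dC (cv dC (LinearMap.mul' k (A ⧸ I) ∘ₗ TensorProduct.map t' t')
        (tinv' ∘ₗ LinearMap.mul' k H)) (t' ∘ₗ LinearMap.mul' k H)
        = t' ∘ₗ LinearMap.mul' k H := by
      rw [hσQ]
      exact cv_one_left dC εC hrTC _
    have rhs1 : cv dC (LinearMap.mul' k (A ⧸ I) ∘ₗ TensorProduct.map t' t')
        (cv dC (tinv' ∘ₗ LinearMap.mul' k H) (t' ∘ₗ LinearMap.mul' k H))
        = LinearMap.mul' k (A ⧸ I) ∘ₗ TensorProduct.map t' t' := by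
      rw [c1_lemma F I]
      exact cv_one_right dC εC hlTC _
    rw [← rhs1, ← e1, lhs1]
  -- t'(1) = 1
  have a1 : t' 1 * tinv' 1 = 1 := by
    have h1 := LinearMap.congr_fun (h1_lemma F I) (1 : H)
    rw [cv_apply] at h1
    rw [Bialgebra.comul_one, Algebra.TensorProduct.one_def] at h1
    simp only [TensorProduct.map_tmul, LinearMap.mul'_apply, LinearMap.comp_apply,
      Algebra.linearMap_apply, Bialgebra.counit_one, map_one] at h1
    exact h1
  have a2 : t' 1 * t' 1 = t' 1 := by
    have h4 := LinearMap.congr_fun hQ4 ((1 : H) ⊗ₜ[k] (1 : H))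
    simp only [LinearMap.comp_apply, TensorProduct.map_tmul, LinearMap.mul'_apply,
      mul_one] at h4
    exact h4
  have ht1 : t' (1 : H) = 1 := by
    have : t' 1 = t' 1 * (t' 1 * tinv' 1) := by rw [a1, mul_one]
    rw [this, ← mul_assoc, a2, a1]
  have talg : t' ∘ₗ Algebra.linearMap k H = Algebra.linearMap k (A ⧸ I) := by
    apply LinearMap.ext; intro r
    simp only [LinearMap.comp_apply, Algebra.linearMap_apply,
      Algebra.algebraMap_eq_smul_one, map_smul, ht1]
  -- Q5 : cv (πl ∘ tS) t' = 1
  have hQ5 : cv (Coalgebra.comul (R := k)) (πl ∘ₗ tSF F) t'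
      = Algebra.linearMap k (A ⧸ I) ∘ₗ Coalgebra.counit (R := k) := by
    unfold cv
    have e : TensorProduct.map (πl ∘ₗ tSF F) t'
        = TensorProduct.map t' t' ∘ₗ
          TensorProduct.map (HopfAlgebra.antipode (R := k)) LinearMap.id := by
      rw [← TensorProduct.map_comp, LinearMap.comp_id]
      unfold tSF
      rw [ht'] 
      simp only [LinearMap.comp_assoc]
    rw [e]
    have step := congrArg (fun L => L ∘ₗ (TensorProduct.map
      (HopfAlgebra.antipode (R := k) (A := H)) LinearMap.id ∘ₗ Coalgebra.comul)) hQ4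
    simp only [LinearMap.comp_assoc] at step ⊢
    rw [step]
    have step2 := congrArg (fun L => t' ∘ₗ L) antipode_ax
    rw [step2, ← LinearMap.comp_assoc, talg]
  -- Q6 : conclude
  calc πl ∘ₗ tSF F
      = cv (Coalgebra.comul (R := k)) (πl ∘ₗ tSF F)
          (Algebra.linearMap k (A ⧸ I) ∘ₗ Coalgebra.counit (R := k)) :=
        (cv_one_right (Coalgebra.comul (R := k)) (Coalgebra.counit (R := k)) hlTH _).symm
    _ = cv (Coalgebra.comul (R := k)) (πl ∘ₗ tSF F)
          (cv (Coalgebra.comul (R := k)) t' tinv') := by rw [h1_lemma F I]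
    _ = cv (Coalgebra.comul (R := k))
          (cv (Coalgebra.comul (R := k)) (πl ∘ₗ tSF F) t') tinv' :=
        (cv_assoc (Coalgebra.comul (R := k)) hcoH _ _ _).symm
    _ = cv (Coalgebra.comul (R := k))
          (Algebra.linearMap k (A ⧸ I) ∘ₗ Coalgebra.counit (R := k)) tinv' := by rw [hQ5]
    _ = tinv' := cv_one_left (Coalgebra.comul (R := k)) (Coalgebra.counit (R := k)) hrTH _

/-- In the quotient by any ideal containing all `p(x) - ε(x)`, one has `t ∘ S ≡ tinv`. -/
theorem tS_eq_tinv_of_p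
    (hp : (Ideal.Quotient.mkₐ k I).toLinearMap ∘ₗ pMap F
      = (Ideal.Quotient.mkₐ k I).toLinearMap ∘ₗ
          (Algebra.linearMap k A ∘ₗ Coalgebra.counit (R := k))) :
    (Ideal.Quotient.mkₐ k I).toLinearMap ∘ₗ tSF F
      = (Ideal.Quotient.mkₐ k I).toLinearMap ∘ₗ F.tinv := by
  set πl := (Ideal.Quotient.mkₐ k I).toLinearMap with hπl
  have hpQ : cv (Coalgebra.comul (R := k)) (πl ∘ₗ F.t) (πl ∘ₗ tSF F)
      = Algebra.linearMap k (A ⧸ I) ∘ₗ Coalgebra.counit (R := k) := by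
    rw [← cv_algHom_comp, ← pMap_eq, hp, ← LinearMap.comp_assoc, alg_push]
  calc πl ∘ₗ tSF F
      = cv (Coalgebra.comul (R := k))
          (Algebra.linearMap k (A ⧸ I) ∘ₗ Coalgebra.counit (R := k)) (πl ∘ₗ tSF F) :=
        (cv_one_left (Coalgebra.comul (R := k)) (Coalgebra.counit (R := k)) hrTH _).symm
    _ = cv (Coalgebra.comul (R := k))
          (cv (Coalgebra.comul (R := k)) (πl ∘ₗ F.tinv) (πl ∘ₗ F.t)) (πl ∘ₗ tSF F) := by
        rw [h2_lemma F I]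
    _ = cv (Coalgebra.comul (R := k)) (πl ∘ₗ F.tinv)
          (cv (Coalgebra.comul (R := k)) (πl ∘ₗ F.t) (πl ∘ₗ tSF F)) :=
        cv_assoc (Coalgebra.comul (R := k)) hcoH _ _ _
    _ = cv (Coalgebra.comul (R := k)) (πl ∘ₗ F.tinv)
          (Algebra.linearMap k (A ⧸ I) ∘ₗ Coalgebra.counit (R := k)) := by rw [hpQ]
    _ = πl ∘ₗ F.tinv :=
        cv_one_right (Coalgebra.comul (R := k)) (Coalgebra.counit (R := k)) hlTH _

theorem p_one
    (hpm : (Ideal.Quotient.mkₐ k I).toLinearMap ∘ₗ tSF F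
      = (Ideal.Quotient.mkₐ k I).toLinearMap ∘ₗ F.tinv) :
    (Ideal.Quotient.mkₐ k I).toLinearMap ∘ₗ pMap F
      = (Ideal.Quotient.mkₐ k I).toLinearMap ∘ₗ
          (Algebra.linearMap k A ∘ₗ Coalgebra.counit (R := k)) := by
  rw [pMap_eq, cv_algHom_comp, hpm, h1_lemma F I, ← LinearMap.comp_assoc, alg_push]

theorem sigma_eq_q
    (hpm : (Ideal.Quotient.mkₐ k I).toLinearMap ∘ₗ tSF F
      = (Ideal.Quotient.mkₐ k I).toLinearMap ∘ₗ F.tinv) :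
    (Ideal.Quotient.mkₐ k I).toLinearMap ∘ₗ σL F
      = (Ideal.Quotient.mkₐ k I).toLinearMap ∘ₗ qMap F := by
  set πl := (Ideal.Quotient.mkₐ k I).toLinearMap with hπl
  have e1 : πl ∘ₗ TinvF F = (πl ∘ₗ F.tinv) ∘ₗ LinearMap.mul' k H := by
    unfold TinvF
    rw [← LinearMap.comp_assoc]
  have eTS : πl ∘ₗ TSF F = (πl ∘ₗ F.tinv) ∘ₗ LinearMap.mul' k H := by
    unfold TSF
    rw [← LinearMap.comp_assoc, hpm]
  unfold σL
  rw [cv_algHom_comp, qMap_eq, cv_algHom_comp, e1, eTS]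

theorem sigma'_one
    (hσ : (Ideal.Quotient.mkₐ k I).toLinearMap ∘ₗ σL F
      = (Ideal.Quotient.mkₐ k I).toLinearMap ∘ₗ (Algebra.linearMap k A ∘ₗ εC)) :
    (Ideal.Quotient.mkₐ k I).toLinearMap ∘ₗ σ'L F
      = (Ideal.Quotient.mkₐ k I).toLinearMap ∘ₗ (Algebra.linearMap k A ∘ₗ εC) := by
  set πl := (Ideal.Quotient.mkₐ k I).toLinearMap with hπl
  have hpush : πl ∘ₗ Algebra.linearMap k A = Algebra.linearMap k (A ⧸ I) :=
    alg_push (Ideal.Quotient.mkₐ k I)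
  have ha : cv dC (LinearMap.mul' k (A ⧸ I) ∘ₗ TensorProduct.map (πl ∘ₗ F.t) (πl ∘ₗ F.t))
      ((πl ∘ₗ F.tinv) ∘ₗ LinearMap.mul' k H) = Algebra.linearMap k (A ⧸ I) ∘ₗ εC := by
    have e0 : πl ∘ₗ σL F = cv dC (πl ∘ₗ ttF F) (πl ∘ₗ TinvF F) := by
      unfold σL
      rw [cv_algHom_comp]
    have e1 : πl ∘ₗ TinvF F = (πl ∘ₗ F.tinv) ∘ₗ LinearMap.mul' k H := by
      unfold TinvF
      rw [← LinearMap.comp_assoc]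
    rw [← htt_lemma F I, ← e1, ← e0, hσ, ← LinearMap.comp_assoc, hpush]
  have hb : πl ∘ₗ σ'L F = cv dC ((πl ∘ₗ F.t) ∘ₗ LinearMap.mul' k H)
      (LinearMap.mul' k (A ⧸ I) ∘ₗ TensorProduct.map (πl ∘ₗ F.tinv) (πl ∘ₗ F.tinv)) := by
    unfold σ'L
    rw [cv_algHom_comp]
    have e2 : πl ∘ₗ TF F = (πl ∘ₗ F.t) ∘ₗ LinearMap.mul' k H := by
      unfold TF
      rw [← LinearMap.comp_assoc]
    have e3 : πl ∘ₗ ssF F = LinearMap.mul' k (A ⧸ I) ∘ₗ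
        TensorProduct.map (πl ∘ₗ F.tinv) (πl ∘ₗ F.tinv) := by
      unfold ssF
      rw [← LinearMap.comp_assoc, algHom_comp_mul'' (Ideal.Quotient.mkₐ k I)]
      simp only [LinearMap.comp_assoc]
      rw [← TensorProduct.map_comp]
    rw [e2, e3]
  have inner : cv dC ((πl ∘ₗ F.tinv) ∘ₗ LinearMap.mul' k H)
      (cv dC ((πl ∘ₗ F.t) ∘ₗ LinearMap.mul' k H)
        (LinearMap.mul' k (A ⧸ I) ∘ₗ TensorProduct.map (πl ∘ₗ F.tinv) (πl ∘ₗ F.tinv)))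
      = LinearMap.mul' k (A ⧸ I) ∘ₗ TensorProduct.map (πl ∘ₗ F.tinv) (πl ∘ₗ F.tinv) := by
    rw [← cv_assoc dC coassoc_dC, c1_lemma F I]
    exact cv_one_left dC εC hrTC _
  have big : cv dC
      (cv dC (LinearMap.mul' k (A ⧸ I) ∘ₗ TensorProduct.map (πl ∘ₗ F.t) (πl ∘ₗ F.t))
        ((πl ∘ₗ F.tinv) ∘ₗ LinearMap.mul' k H))
      (cv dC ((πl ∘ₗ F.t) ∘ₗ LinearMap.mul' k H)
        (LinearMap.mul' k (A ⧸ I) ∘ₗ TensorProduct.map (πl ∘ₗ F.tinv) (πl ∘ₗ F.tinv)))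
      = Algebra.linearMap k (A ⧸ I) ∘ₗ εC := by
    rw [cv_assoc dC coassoc_dC, inner, cv_mul_mul, h1_lemma F I, one_one]
  rw [ha] at big
  rw [cv_one_left dC εC hrTC _] at big
  rw [hb, big, ← LinearMap.comp_assoc, hpush]

end Chains

end Main

end StmtAux


open StmtAux

/-- The Hopf ideal of `S(t_H)_Θ` generated by `W_H⁺ = W_H ∩ ker ε` coincides with
the Hopf ideal generated by `B_H⁺ = B_H ∩ ker ε`, where `W_H` is the subalgebra generated by the
elements `p_x` and `q_{x,y}` and `B_H` is the generic base algebra. -/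
theorem stmt_16 (k : Type*) [Field k] (H : Type*) [Ring H] [HopfAlgebra k H]
    (A : Type*) [CommRing A] [HopfAlgebra k A] (F : FreeCommHopfData k H A) :
    Ideal.span {a : A |
        a ∈ Algebra.adjoin k
          ({a | ∃ x : H, a = pMap F x} ∪ {a | ∃ x y : H, a = qMap F (x ⊗ₜ[k] y)}) ∧
        Coalgebra.counit (R := k) a = 0} =
    Ideal.span {a : A | a ∈ genericBase F ∧ Coalgebra.counit (R := k) a = 0} := by
  classical
  set WS : Set A :=
    ({a | ∃ x : H, a = pMap F x} ∪ {a | ∃ x y : H, a = qMap F (x ⊗ₜ[k] y)}) with hWS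
  set IW : Ideal A := Ideal.span {a : A | a ∈ Algebra.adjoin k WS ∧
    Coalgebra.counit (R := k) a = 0} with hIW
  set IB : Ideal A := Ideal.span {a : A | a ∈ genericBase F ∧
    Coalgebra.counit (R := k) a = 0} with hIB
  -- counit vanishes on both ideals
  have hker : ∀ (S : Set A), (∀ a ∈ S, Coalgebra.counit (R := k) a = 0) →
      ∀ u ∈ Ideal.span S, Coalgebra.counit (R := k) u = 0 := by
    intro S hS u hu
    have hle : Ideal.span S ≤ RingHom.ker ((Bialgebra.counitAlgHom k A) : A →+* k) := by
      rw [Ideal.span_le]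
      intro a ha
      rw [SetLike.mem_coe, RingHom.mem_ker]
      exact hS a ha
    have := hle hu
    rwa [RingHom.mem_ker] at this
  -- generic finishing argument
  have finish : ∀ (I J : Ideal A) (S : Set A),
      (∀ u ∈ I, Coalgebra.counit (R := k) u = 0) →
      J = Ideal.span {a : A | a ∈ Algebra.adjoin k S ∧ Coalgebra.counit (R := k) a = 0} →
      (∀ a ∈ S, ∃ c : k, a - algebraMap k A c ∈ I) → J ≤ I := by
    intro I J S hIk hJ hgen
    have claim : ∀ a ∈ Algebra.adjoin k S, ∃ c : k, a - algebraMap k A c ∈ I := by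
      intro a ha
      refine Algebra.adjoin_induction (p := fun x _ => ∃ c : k, x - algebraMap k A c ∈ I)
        ?_ ?_ ?_ ?_ ha
      · exact hgen
      · intro r
        exact ⟨r, by simp⟩
      · rintro x y _ _ ⟨c, hc⟩ ⟨d, hd⟩
        refine ⟨c + d, ?_⟩
        rw [map_add]
        have e : x + y - (algebraMap k A c + algebraMap k A d)
            = (x - algebraMap k A c) + (y - algebraMap k A d) := by ring
        rw [e]
        exact add_mem hc hd
      · rintro x y _ _ ⟨c, hc⟩ ⟨d, hd⟩
        refine ⟨c * d, ?_⟩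
        rw [map_mul]
        have e : x * y - algebraMap k A c * algebraMap k A d
            = x * (y - algebraMap k A d) + (x - algebraMap k A c) * algebraMap k A d := by
          ring
        rw [e]
        exact add_mem (Ideal.mul_mem_left _ _ hd) (Ideal.mul_mem_right _ _ hc)
    rw [hJ, Ideal.span_le]
    rintro a ⟨haB, haε⟩
    obtain ⟨c, hc⟩ := claim a haB
    have hv := hIk _ hc
    have hc0 : c = 0 := by
      have h2 : Coalgebra.counit (R := k) a - c = 0 := by
        simpa [map_sub, Bialgebra.counit_algebraMap] using hv
      rwa [haε, zero_sub, neg_eq_zero] at h2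
    rw [hc0, map_zero, sub_zero] at hc
    exact hc
  apply le_antisymm
  -- direction 1 : IW ≤ IB
  · have hσB : ∀ x y : H, sigmaElem F x y - algebraMap k A (εC (x ⊗ₜ[k] y)) ∈ IB := by
      intro x y
      apply Ideal.subset_span
      constructor
      · exact sub_mem (Algebra.subset_adjoin (Or.inl ⟨x, y, rfl⟩))
          (Subalgebra.algebraMap_mem _ _)
      · have hε : Coalgebra.counit (R := k) (sigmaElem F x y) = εC (x ⊗ₜ[k] y) := by
          rw [sigmaElem_eq]
          exact LinearMap.congr_fun (counit_comp_σ F) (x ⊗ₜ[k] y)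
        simp [map_sub, hε, Bialgebra.counit_algebraMap]
    have hσBz : ∀ z : H ⊗[k] H,
        ((σL F - (Algebra.linearMap k A ∘ₗ εC) : (H ⊗[k] H) →ₗ[k] A)) z ∈ IB := by
      apply forall_mem_of_tmul
      intro x y
      simp only [LinearMap.sub_apply, LinearMap.comp_apply, Algebra.linearMap_apply]
      rw [← sigmaElem_eq]
      exact hσB x y
    have hσBm : (Ideal.Quotient.mkₐ k IB).toLinearMap ∘ₗ σL F
        = (Ideal.Quotient.mkₐ k IB).toLinearMap ∘ₗ (Algebra.linearMap k A ∘ₗ εC) :=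
      (pi_comp_eq_iff IB _ _).mpr (fun z => by simpa using hσBz z)
    have hpmB := tS_eq_tinv_of_sigma F IB hσBm
    have hpBm := p_one F IB hpmB
    have hqBm := (sigma_eq_q F IB hpmB).symm.trans hσBm
    have hpB := (pi_comp_eq_iff IB _ _).mp hpBm
    have hqB := (pi_comp_eq_iff IB _ _).mp hqBm
    apply finish IB IW WS (hker _ (fun a ha => ha.2)) hIW
    rintro s (⟨x, rfl⟩ | ⟨x, y, rfl⟩)
    · refine ⟨Coalgebra.counit (R := k) x, ?_⟩
      simpa using hpB x
    · refine ⟨εC (x ⊗ₜ[k] y), ?_⟩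
      simpa using hqB (x ⊗ₜ[k] y)
  -- direction 2 : IB ≤ IW
  · have hpW : ∀ x : H, pMap F x - algebraMap k A (Coalgebra.counit (R := k) x) ∈ IW := by
      intro x
      apply Ideal.subset_span
      constructor
      · exact sub_mem (Algebra.subset_adjoin (Or.inl ⟨x, rfl⟩))
          (Subalgebra.algebraMap_mem _ _)
      · have hε : Coalgebra.counit (R := k) (pMap F x) = Coalgebra.counit (R := k) x :=
          LinearMap.congr_fun (counit_comp_p F) x
        simp [map_sub, hε, Bialgebra.counit_algebraMap]
    have hqW : ∀ x y : H, qMap F (x ⊗ₜ[k] y) - algebraMap k A (εC (x ⊗ₜ[k] y)) ∈ IW := by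
      intro x y
      apply Ideal.subset_span
      constructor
      · exact sub_mem (Algebra.subset_adjoin (Or.inr ⟨x, y, rfl⟩))
          (Subalgebra.algebraMap_mem _ _)
      · have hε : Coalgebra.counit (R := k) (qMap F (x ⊗ₜ[k] y)) = εC (x ⊗ₜ[k] y) :=
          LinearMap.congr_fun (counit_comp_q F) (x ⊗ₜ[k] y)
        simp [map_sub, hε, Bialgebra.counit_algebraMap]
    have hpWm : (Ideal.Quotient.mkₐ k IW).toLinearMap ∘ₗ pMap F
        = (Ideal.Quotient.mkₐ k IW).toLinearMap ∘ₗ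
            (Algebra.linearMap k A ∘ₗ Coalgebra.counit (R := k)) :=
      (pi_comp_eq_iff IW _ _).mpr (fun x => by simpa using hpW x)
    have hqWz : ∀ z : H ⊗[k] H,
        ((qMap F - (Algebra.linearMap k A ∘ₗ εC) : (H ⊗[k] H) →ₗ[k] A)) z ∈ IW := by
      apply forall_mem_of_tmul
      intro x y
      simp only [LinearMap.sub_apply, LinearMap.comp_apply, Algebra.linearMap_apply]
      exact hqW x y
    have hqWm : (Ideal.Quotient.mkₐ k IW).toLinearMap ∘ₗ qMap F
        = (Ideal.Quotient.mkₐ k IW).toLinearMap ∘ₗ (Algebra.linearMap k A ∘ₗ εC) :=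
      (pi_comp_eq_iff IW _ _).mpr (fun z => by simpa using hqWz z)
    have hpmW := tS_eq_tinv_of_p F IW hpWm
    have hσWm := (sigma_eq_q F IW hpmW).trans hqWm
    have hσ'Wm := sigma'_one F IW hσWm
    have hσW := (pi_comp_eq_iff IW _ _).mp hσWm
    have hσ'W := (pi_comp_eq_iff IW _ _).mp hσ'Wm
    apply finish IW IB _ (hker _ (fun a ha => ha.2)) hIB
    rintro s (⟨x, y, rfl⟩ | ⟨x, y, rfl⟩)
    · refine ⟨εC (x ⊗ₜ[k] y), ?_⟩
      rw [sigmaElem_eq]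
      simpa using hσW (x ⊗ₜ[k] y)
    · refine ⟨εC (x ⊗ₜ[k] y), ?_⟩
      rw [sigmaInvElem_eq]
      simpa using hσ'W (x ⊗ₜ[k] y)


end
end
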